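/- arXiv:1904.04607 — 4 statements merged into one kernel-verified Lean document; each statement's English description precedes it below -/
import Mathlib

section
/- Let F be a distribution function on (0,∞) with F(x) < 1 for all x, and let (X_i) be i.i.d. with distribution F. Then F is subexponential if and only if both of the following hold: (i) F is long-tailed, i.e. F̄(x+y)/F̄(x) → 1 as x → ∞ for every real y; and (ii) there exists a sequence γ_n → ∞ such that limsup_{n→∞} sup_{x > γ_n} P(S_n > x)/(n F̄(x)) ≤ 1. -/
open MeasureTheory ProbabilityTheory Filter Topology Real

/-- The partial sum `S_n = X_1 + ⋯ + X_n`. -/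
noncomputable def partialSum {Ω : Type*} (X : ℕ → Ω → ℝ) (n : ℕ) (ω : Ω) : ℝ :=
  ∑ i ∈ Finset.range n, X i ω

set_option linter.unusedSectionVars false
open MeasureTheory ProbabilityTheory Filter Topology Real
open scoped ENNReal


section Aux
variable {Ω : Type*} [MeasureSpace Ω] [IsProbabilityMeasure (ℙ : Measure Ω)]
  {X : ℕ → Ω → ℝ}

lemma partialSum_meas (hmeas : ∀ i, Measurable (X i)) (n : ℕ) :
    Measurable (partialSum X n) :=
  Finset.measurable_sum _ (fun i _ => hmeas i)

lemma tail_meas {g : Ω → ℝ} (hg : Measurable g) (x : ℝ) :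
    MeasurableSet {ω | x < g ω} :=
  measurableSet_lt measurable_const hg

lemma tail_tendsto_zero {g : Ω → ℝ} (hg : Measurable g) :
    Tendsto (fun x : ℝ => (ℙ {ω | x < g ω}).toReal) atTop (𝓝 0) := by
  have h0 : Tendsto (fun x : ℝ => ℙ {ω | x < g ω}) atTop (𝓝 (ℙ (⋂ x : ℝ, {ω | x < g ω}))) := by
    exact tendsto_measure_iInter_atTop (fun x => (tail_meas hg x).nullMeasurableSet)
      (fun x y hxy => fun ω hω => lt_of_le_of_lt hxy hω) ⟨0, measure_ne_top _ _⟩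
  have he : (⋂ x : ℝ, {ω | x < g ω}) = (∅ : Set Ω) := by
    ext ω; simp only [Set.mem_iInter, Set.mem_setOf_eq, Set.mem_empty_iff_false, iff_false,
      not_forall, not_lt]
    exact ⟨g ω, le_refl _⟩
  rw [he, measure_empty] at h0
  have h1 := (ENNReal.tendsto_toReal ENNReal.zero_ne_top).comp h0
  exact h1

lemma tail_pos_toReal (htail_pos : ∀ x : ℝ, 0 < ℙ {ω | x < X 0 ω}) (x : ℝ) :
    0 < (ℙ {ω | x < X 0 ω}).toReal :=
  ENNReal.toReal_pos (htail_pos x).ne' (measure_ne_top _ _)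


/-- The probability that all of `X_0,...,X_{n-1}` are `≤ x`. -/
lemma prob_all_le (hmeas : ∀ i, Measurable (X i))
    (hindep : iIndepFun X ℙ)
    (hident : ∀ i, IdentDistrib (X i) (X 0) ℙ ℙ) (n : ℕ) (x : ℝ) :
    ℙ (⋂ i ∈ Finset.range n, X i ⁻¹' (Set.Iic x)) = (ℙ (X 0 ⁻¹' (Set.Iic x))) ^ n := by
  have h := hindep.measure_inter_preimage_eq_mul (Finset.range n)
    (sets := fun _ => Set.Iic x) (fun i _ => measurableSet_Iic)
  rw [h]
  have : ∀ i ∈ Finset.range n, ℙ (X i ⁻¹' (Set.Iic x)) = ℙ (X 0 ⁻¹' (Set.Iic x)) :=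
    fun i _ => (hident i).measure_mem_eq measurableSet_Iic
  rw [Finset.prod_congr rfl this, Finset.prod_const, Finset.card_range]

/-- Lower bound `P(S_n > x) ≥ 1 - F(x)^n`. -/
lemma partialSum_tail_lower (hmeas : ∀ i, Measurable (X i))
    (hindep : iIndepFun X ℙ)
    (hident : ∀ i, IdentDistrib (X i) (X 0) ℙ ℙ)
    (hnonneg : ∀ i ω, 0 ≤ X i ω) (n : ℕ) (x : ℝ) :
    1 - (1 - (ℙ {ω | x < X 0 ω}).toReal) ^ n ≤ (ℙ {ω | x < partialSum X n ω}).toReal := by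
  have hsub : {ω | partialSum X n ω ≤ x} ⊆ ⋂ i ∈ Finset.range n, X i ⁻¹' (Set.Iic x) := by
    intro ω hω
    simp only [Set.mem_iInter, Set.mem_preimage, Set.mem_Iic]
    intro i hi
    refine le_trans ?_ hω
    exact Finset.single_le_sum (f := fun j => X j ω) (fun j _ => hnonneg j ω) hi
  have hle : ℙ {ω | partialSum X n ω ≤ x} ≤ (ℙ (X 0 ⁻¹' (Set.Iic x))) ^ n := by
    rw [← prob_all_le hmeas hindep hident n x]
    exact measure_mono hsub
  have hcompl : {ω | x < partialSum X n ω} = {ω | partialSum X n ω ≤ x}ᶜ := by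
    ext ω; simp [not_le]
  have hms : MeasurableSet {ω | partialSum X n ω ≤ x} :=
    measurableSet_le (partialSum_meas hmeas n) measurable_const
  have h1 : (ℙ {ω | x < partialSum X n ω}).toReal
      = 1 - (ℙ {ω | partialSum X n ω ≤ x}).toReal := by
    rw [hcompl, prob_compl_eq_one_sub hms]
    rw [ENNReal.toReal_sub_of_le (prob_le_one) ENNReal.one_ne_top, ENNReal.toReal_one]
  rw [h1]
  have hF : (ℙ (X 0 ⁻¹' (Set.Iic x))).toReal = 1 - (ℙ {ω | x < X 0 ω}).toReal := by
    have : (X 0 ⁻¹' (Set.Iic x)) = {ω | x < X 0 ω}ᶜ := by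
      ext ω; simp [Set.mem_preimage, not_lt]
    rw [this, prob_compl_eq_one_sub (tail_meas (hmeas 0) x)]
    rw [ENNReal.toReal_sub_of_le (prob_le_one) ENNReal.one_ne_top, ENNReal.toReal_one]
  have h2 : (ℙ {ω | partialSum X n ω ≤ x}).toReal
      ≤ (1 - (ℙ {ω | x < X 0 ω}).toReal) ^ n := by
    rw [← hF]
    calc (ℙ {ω | partialSum X n ω ≤ x}).toReal
        ≤ ((ℙ (X 0 ⁻¹' (Set.Iic x))) ^ n).toReal :=
          ENNReal.toReal_mono (by simp [ENNReal.pow_ne_top, measure_ne_top]) hle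
      _ = (ℙ (X 0 ⁻¹' (Set.Iic x))).toReal ^ n := by rw [ENNReal.toReal_pow]
  linarith


lemma indepFun_sum_sum (hmeas : ∀ i, Measurable (X i))
    (hindep : iIndepFun X ℙ)
    {s t : Finset ℕ} (hst : Disjoint s t) :
    IndepFun (fun ω => ∑ i ∈ s, X i ω) (fun ω => ∑ i ∈ t, X i ω) ℙ := by
  have h := hindep.indepFun_finset s t hst hmeas
  have hφ : ∀ u : Finset ℕ, Measurable (fun v : ↥u → ℝ => ∑ i : ↥u, v i) :=
    fun u => Finset.measurable_sum _ (fun i _ => measurable_pi_apply i)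
  have h2 := h.comp (hφ s) (hφ t)
  have e1 : ((fun v : ↥s → ℝ => ∑ i : ↥s, v i) ∘ (fun a (i : ↥s) => X i a))
      = fun ω => ∑ i ∈ s, X i ω := by
    funext ω; simp only [Function.comp]; exact Finset.sum_attach _ (fun j => X j ω)
  have e2 : ((fun v : ↥t → ℝ => ∑ i : ↥t, v i) ∘ (fun a (i : ↥t) => X i a))
      = fun ω => ∑ i ∈ t, X i ω := by
    funext ω; simp only [Function.comp]; exact Finset.sum_attach _ (fun j => X j ω)
  rwa [e1, e2] at h2

lemma identDistrib_add {f g f' g' : Ω → ℝ}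
    (hf : Measurable f) (hg : Measurable g) (hf' : Measurable f') (hg' : Measurable g')
    (h1 : IdentDistrib f f' ℙ ℙ) (h2 : IdentDistrib g g' ℙ ℙ)
    (hi : IndepFun f g ℙ) (hi' : IndepFun f' g' ℙ) :
    IdentDistrib (f + g) (f' + g') ℙ ℙ := by
  refine ⟨(hf.add hg).aemeasurable, (hf'.add hg').aemeasurable, ?_⟩
  have e1 : Measure.map (f + g) ℙ
      = (((ℙ : Measure Ω).map f).prod ((ℙ : Measure Ω).map g)).map
          (fun p : ℝ × ℝ => p.1 + p.2) := by
    rw [← (indepFun_iff_map_prod_eq_prod_map_map hf.aemeasurable hg.aemeasurable).1 hi,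
      Measure.map_map measurable_add (hf.prodMk hg)]
    rfl
  have e2 : Measure.map (f' + g') ℙ
      = (((ℙ : Measure Ω).map f').prod ((ℙ : Measure Ω).map g')).map
          (fun p : ℝ × ℝ => p.1 + p.2) := by
    rw [← (indepFun_iff_map_prod_eq_prod_map_map hf'.aemeasurable hg'.aemeasurable).1 hi',
      Measure.map_map measurable_add (hf'.prodMk hg')]
    rfl
  rw [e1, e2, h1.map_eq, h2.map_eq]

lemma shift_sum_eq_Ico (n m : ℕ) :
    (fun ω => ∑ i ∈ Finset.range m, X (n + i) ω) = fun ω => ∑ j ∈ Finset.Ico n (n + m), X j ω := by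
  funext ω
  rw [Finset.sum_Ico_eq_sum_range]
  simp

lemma identDistrib_shift_sum (hmeas : ∀ i, Measurable (X i))
    (hindep : iIndepFun X ℙ)
    (hident : ∀ i, IdentDistrib (X i) (X 0) ℙ ℙ) (n m : ℕ) :
    IdentDistrib (fun ω => ∑ i ∈ Finset.range m, X (n + i) ω) (partialSum X m) ℙ ℙ := by
  induction m with
  | zero => simp only [Finset.range_zero, Finset.sum_empty, partialSum]
            exact IdentDistrib.refl aemeasurable_const
  | succ m ih =>
    have hs1 : (fun ω => ∑ i ∈ Finset.range (m+1), X (n + i) ω)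
        = (fun ω => ∑ i ∈ Finset.range m, X (n + i) ω) + (fun ω => X (n + m) ω) := by
      funext ω; simp [Finset.sum_range_succ]
    have hs2 : partialSum X (m+1) = partialSum X m + X m := by
      funext ω; simp [partialSum, Finset.sum_range_succ]
    rw [hs1, hs2]
    have hmeas1 : Measurable (fun ω => ∑ i ∈ Finset.range m, X (n + i) ω) :=
      Finset.measurable_sum _ (fun i _ => hmeas _)
    have hind1 : IndepFun (fun ω => ∑ i ∈ Finset.range m, X (n + i) ω) (X (n + m)) ℙ := by
      rw [shift_sum_eq_Ico]
      have := hindep.indepFun_finsetSum_of_notMem hmeas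
        (s := Finset.Ico n (n + m)) (i := n + m) (by simp)
      have e : (∑ j ∈ Finset.Ico n (n + m), X j) = fun ω => ∑ j ∈ Finset.Ico n (n + m), X j ω := by
        funext ω; rw [Finset.sum_apply]
      rwa [e] at this
    have hind2 : IndepFun (partialSum X m) (X m) ℙ := by
      have := hindep.indepFun_finsetSum_of_notMem hmeas
        (s := Finset.range m) (i := m) (by simp)
      have e : (∑ j ∈ Finset.range m, X j) = partialSum X m := by
        funext ω; rw [Finset.sum_apply]; rfl
      rwa [e] at this
    exact identDistrib_add hmeas1 (hmeas _) (partialSum_meas hmeas m) (hmeas m)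
      ih ((hident (n+m)).trans (hident m).symm) hind1 hind2


/-- Doubling inequality: `P(S_{2n} > x) ≥ 2 p - p²` where `p = P(S_n > x)`. -/
lemma doubling (hmeas : ∀ i, Measurable (X i))
    (hindep : iIndepFun X ℙ)
    (hident : ∀ i, IdentDistrib (X i) (X 0) ℙ ℙ)
    (hnonneg : ∀ i ω, 0 ≤ X i ω) (n : ℕ) (x : ℝ) :
    2 * (ℙ {ω | x < partialSum X n ω}).toReal - (ℙ {ω | x < partialSum X n ω}).toReal ^ 2
      ≤ (ℙ {ω | x < partialSum X (2 * n) ω}).toReal := by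
  set T : Ω → ℝ := fun ω => ∑ i ∈ Finset.range n, X (n + i) ω with hT
  have hT_meas : Measurable T := Finset.measurable_sum _ (fun i _ => hmeas _)
  have hS_meas := partialSum_meas hmeas n
  have hid : IdentDistrib T (partialSum X n) ℙ ℙ := identDistrib_shift_sum hmeas hindep hident n n
  have hsplit : ∀ ω, partialSum X (2 * n) ω = partialSum X n ω + T ω := by
    intro ω
    simp only [partialSum, hT, two_mul]
    exact Finset.sum_range_add (fun j => X j ω) n n
  have hind : IndepFun (partialSum X n) T ℙ := by
    have e : T = fun ω => ∑ j ∈ Finset.Ico n (n + n), X j ω := shift_sum_eq_Ico n n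
    rw [e]
    have hdisj : Disjoint (Finset.range n) (Finset.Ico n (n + n)) := by
      simp [Finset.disjoint_left]
      intro a ha hn; omega
    exact indepFun_sum_sum hmeas hindep hdisj
  set A : Set Ω := {ω | x < partialSum X n ω} with hA
  set B : Set Ω := (partialSum X n) ⁻¹' (Set.Iic x) ∩ T ⁻¹' (Set.Ioi x) with hB
  have hA_meas : MeasurableSet A := tail_meas hS_meas x
  have hB_meas : MeasurableSet B :=
    ((hS_meas measurableSet_Iic).inter (hT_meas measurableSet_Ioi))
  have hdisjAB : Disjoint A B := by
    rw [Set.disjoint_left]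
    intro ω hωA hωB
    exact absurd hωB.1 (by simpa using not_le.2 hωA)
  have hsubset : A ∪ B ⊆ {ω | x < partialSum X (2*n) ω} := by
    intro ω hω
    rcases hω with hω | hω
    · have hTn : 0 ≤ T ω := Finset.sum_nonneg (fun i _ => hnonneg _ ω)
      simp only [Set.mem_setOf_eq, hsplit ω]
      calc x < partialSum X n ω := hω
        _ ≤ partialSum X n ω + T ω := by linarith
    · have hSn : 0 ≤ partialSum X n ω := Finset.sum_nonneg (fun i _ => hnonneg _ ω)
      simp only [Set.mem_setOf_eq, hsplit ω]
      have : x < T ω := hω.2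
      linarith
  have hBmeasure : ℙ B = ℙ ((partialSum X n) ⁻¹' (Set.Iic x)) * ℙ (T ⁻¹' (Set.Ioi x)) :=
    hind.measure_inter_preimage_eq_mul _ _ measurableSet_Iic measurableSet_Ioi
  have hTtail : ℙ (T ⁻¹' (Set.Ioi x)) = ℙ A := by
    have := hid.measure_mem_eq (s := Set.Ioi x) measurableSet_Ioi
    rw [this]; rfl
  have hScompl : ℙ ((partialSum X n) ⁻¹' (Set.Iic x)) = 1 - ℙ A := by
    have : (partialSum X n) ⁻¹' (Set.Iic x) = Aᶜ := by
      ext ω; simp [hA, Set.mem_preimage, not_lt]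
    rw [this, prob_compl_eq_one_sub hA_meas]
  set p : ℝ := (ℙ A).toReal with hp
  have hptoReal : ((1 - ℙ A) * ℙ A).toReal = (1 - p) * p := by
    rw [ENNReal.toReal_mul, ENNReal.toReal_sub_of_le prob_le_one ENNReal.one_ne_top,
      ENNReal.toReal_one]
  have hunion : (ℙ (A ∪ B)).toReal = p + (1 - p) * p := by
    rw [measure_union hdisjAB hB_meas, ENNReal.toReal_add (measure_ne_top _ _) (measure_ne_top _ _),
      hBmeasure, hTtail, hScompl, hptoReal]
  have hmono : (ℙ (A ∪ B)).toReal ≤ (ℙ {ω | x < partialSum X (2*n) ω}).toReal :=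
    ENNReal.toReal_mono (measure_ne_top _ _) (measure_mono hsubset)
  rw [hunion] at hmono
  nlinarith [hmono]


/-- Two-slice lower bound for `P(S_2 > x)` used to prove long-tailedness. -/
lemma slice_bound (hmeas : ∀ i, Measurable (X i))
    (hindep : iIndepFun X ℙ)
    (hident : ∀ i, IdentDistrib (X i) (X 0) ℙ ℙ)
    (hnonneg : ∀ i ω, 0 ≤ X i ω) (y x : ℝ) (hyx : y ≤ x) :
    (ℙ {ω | x < X 0 ω}).toReal * (1 + (ℙ (X 0 ⁻¹' Set.Iic y)).toReal)
      + (ℙ (X 0 ⁻¹' Set.Ioc y x)).toReal * (ℙ {ω | x - y < X 0 ω}).toReal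
      ≤ (ℙ {ω | x < partialSum X 2 ω}).toReal := by
  have h01 : IndepFun (X 0) (X 1) ℙ := hindep.indepFun (by norm_num)
  set E3 : Set Ω := X 0 ⁻¹' Set.Ioi x with hE3
  set E1 : Set Ω := X 0 ⁻¹' Set.Iic y ∩ X 1 ⁻¹' Set.Ioi x with hE1
  set E2 : Set Ω := X 0 ⁻¹' Set.Ioc y x ∩ X 1 ⁻¹' Set.Ioi (x - y) with hE2
  have hm3 : MeasurableSet E3 := (hmeas 0) measurableSet_Ioi
  have hm1 : MeasurableSet E1 := ((hmeas 0) measurableSet_Iic).inter ((hmeas 1) measurableSet_Ioi)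
  have hm2 : MeasurableSet E2 := ((hmeas 0) measurableSet_Ioc).inter ((hmeas 1) measurableSet_Ioi)
  have hS2 : ∀ ω, partialSum X 2 ω = X 0 ω + X 1 ω := by
    intro ω; simp [partialSum, Finset.sum_range_succ]
  have hsub : E3 ∪ E1 ∪ E2 ⊆ {ω | x < partialSum X 2 ω} := by
    intro ω hω
    simp only [Set.mem_setOf_eq, hS2 ω]
    rcases hω with (hω | hω) | hω
    · have := hnonneg 1 ω
      have h0 : x < X 0 ω := hω
      linarith
    · have := hnonneg 0 ω
      have h1 : x < X 1 ω := hω.2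
      linarith
    · have h0 : y < X 0 ω := hω.1.1
      have h1 : x - y < X 1 ω := hω.2
      linarith
  have hd31 : Disjoint E3 E1 := by
    rw [Set.disjoint_left]
    intro ω h3 h1
    have : x < X 0 ω := h3
    have : X 0 ω ≤ y := h1.1
    linarith
  have hd32 : Disjoint E3 E2 := by
    rw [Set.disjoint_left]
    intro ω h3 h2
    have : x < X 0 ω := h3
    have : X 0 ω ≤ x := h2.1.2
    linarith
  have hd12 : Disjoint E1 E2 := by
    rw [Set.disjoint_left]
    intro ω h1 h2
    have : X 0 ω ≤ y := h1.1
    have : y < X 0 ω := h2.1.1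
    linarith
  have hPE1 : ℙ E1 = ℙ (X 0 ⁻¹' Set.Iic y) * ℙ {ω | x < X 0 ω} := by
    rw [h01.measure_inter_preimage_eq_mul _ _ measurableSet_Iic measurableSet_Ioi]
    congr 1
    exact (hident 1).measure_mem_eq measurableSet_Ioi
  have hPE2 : ℙ E2 = ℙ (X 0 ⁻¹' Set.Ioc y x) * ℙ {ω | x - y < X 0 ω} := by
    rw [h01.measure_inter_preimage_eq_mul _ _ measurableSet_Ioc measurableSet_Ioi]
    congr 1
    exact (hident 1).measure_mem_eq measurableSet_Ioi
  have hPE3 : ℙ E3 = ℙ {ω | x < X 0 ω} := rfl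
  have hunion : ℙ (E3 ∪ E1 ∪ E2) = ℙ E3 + ℙ E1 + ℙ E2 := by
    rw [measure_union (Set.disjoint_union_left.2 ⟨hd32, hd12⟩) hm2,
      measure_union hd31 hm1]
  have hfin : ∀ s : Set Ω, ℙ s ≠ ⊤ := fun s => measure_ne_top _ _
  have hmono := ENNReal.toReal_mono (hfin _) (measure_mono hsub)
  rw [hunion] at hmono
  rw [ENNReal.toReal_add (by finiteness) (hfin _), ENNReal.toReal_add (hfin _) (hfin _)] at hmono
  rw [hPE1, hPE2, hPE3, ENNReal.toReal_mul, ENNReal.toReal_mul] at hmono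
  nlinarith [hmono]


lemma tail_antitone (x1 x2 : ℝ) (h : x1 ≤ x2) :
    (ℙ {ω | x2 < X 0 ω}).toReal ≤ (ℙ {ω | x1 < X 0 ω}).toReal :=
  ENNReal.toReal_mono (measure_ne_top _ _)
    (measure_mono (fun ω hω => lt_of_le_of_lt h hω))

lemma longtail_of_subexp2 (hmeas : ∀ i, Measurable (X i))
    (hindep : iIndepFun X ℙ)
    (hident : ∀ i, IdentDistrib (X i) (X 0) ℙ ℙ)
    (hnonneg : ∀ i ω, 0 ≤ X i ω)
    (htail_pos : ∀ x : ℝ, 0 < ℙ {ω | x < X 0 ω})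
    (h2 : Tendsto (fun x : ℝ => (ℙ {ω | x < partialSum X 2 ω}).toReal
        / (2 * (ℙ {ω | x < X 0 ω}).toReal)) atTop (𝓝 1))
    (y : ℝ) (hy : 0 ≤ y) :
    Tendsto (fun x : ℝ => (ℙ {ω | x - y < X 0 ω}).toReal / (ℙ {ω | x < X 0 ω}).toReal)
      atTop (𝓝 1) := by
  set Fb : ℝ → ℝ := fun x => (ℙ {ω | x < X 0 ω}).toReal with hFb
  have hFbpos : ∀ x, 0 < Fb x := tail_pos_toReal htail_pos
  have hFb0 : Tendsto Fb atTop (𝓝 0) := tail_tendsto_zero (hmeas 0)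
  set py : ℝ := Fb y with hpy
  have hpypos : 0 < py := hFbpos y
  have hcy : (ℙ (X 0 ⁻¹' Set.Iic y)).toReal = 1 - py := by
    have he : (X 0 ⁻¹' Set.Iic y) = {ω | y < X 0 ω}ᶜ := by
      ext ω; simp [not_lt]
    rw [he, prob_compl_eq_one_sub (tail_meas (hmeas 0) y),
      ENNReal.toReal_sub_of_le prob_le_one ENNReal.one_ne_top, ENNReal.toReal_one]
  have hA : ∀ x, y ≤ x → (ℙ (X 0 ⁻¹' Set.Ioc y x)).toReal = py - Fb x := by
    intro x hx
    have he : X 0 ⁻¹' Set.Ioc y x = (X 0 ⁻¹' Set.Ioi y) \ (X 0 ⁻¹' Set.Ioi x) := by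
      rw [← Set.preimage_diff, Set.Ioi_diff_Ioi]
    rw [he, measure_diff (Set.preimage_mono (Set.Ioi_subset_Ioi hx))
      (((hmeas 0) measurableSet_Ioi).nullMeasurableSet) (measure_ne_top _ _),
      ENNReal.toReal_sub_of_le (measure_mono (Set.preimage_mono (Set.Ioi_subset_Ioi hx)))
        (measure_ne_top _ _)]
    rfl
  set U : ℝ → ℝ := fun x => (2 * ((ℙ {ω | x < partialSum X 2 ω}).toReal / (2 * Fb x))
      - (2 - py)) / (py - Fb x) with hU
  have hUlim : Tendsto U atTop (𝓝 1) := by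
    have hnum : Tendsto (fun x => 2 * ((ℙ {ω | x < partialSum X 2 ω}).toReal / (2 * Fb x))
        - (2 - py)) atTop (𝓝 (2 * 1 - (2 - py))) := by
      exact ((h2.const_mul 2).sub tendsto_const_nhds)
    have hden : Tendsto (fun x => py - Fb x) atTop (𝓝 py) := by
      simpa using hFb0.const_sub py
    have := hnum.div hden hpypos.ne'
    have he : (2 * 1 - (2 - py)) / py = 1 := by
      field_simp
      ring
    rwa [he] at this
  have hev : ∀ᶠ x : ℝ in atTop,
      (ℙ {ω | x - y < X 0 ω}).toReal / (ℙ {ω | x < X 0 ω}).toReal ≤ U x := by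
    have h1 : ∀ᶠ x : ℝ in atTop, y ≤ x := eventually_ge_atTop y
    have h2' : ∀ᶠ x : ℝ in atTop, Fb x < py := hFb0.eventually_lt_const hpypos
    filter_upwards [h1, h2'] with x hx hFx
    have hslice := slice_bound hmeas hindep hident hnonneg y x hx
    rw [hcy, hA x hx] at hslice
    have hApos : 0 < py - Fb x := by linarith
    rw [div_le_div_iff₀ (hFbpos x) hApos]
    have hP2 : 2 * ((ℙ {ω | x < partialSum X 2 ω}).toReal / (2 * Fb x)) * Fb x
        = (ℙ {ω | x < partialSum X 2 ω}).toReal := by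
      field_simp [(hFbpos x).ne']
    -- goal : Fb (x - y) * (py - Fb x) ≤ (2 * (P2 / (2 Fb x)) - (2 - py)) * Fb x
    have expand : (2 * ((ℙ {ω | x < partialSum X 2 ω}).toReal / (2 * Fb x)) - (2 - py)) * Fb x
        = (ℙ {ω | x < partialSum X 2 ω}).toReal - (2 - py) * Fb x := by
      rw [sub_mul, hP2]
    rw [expand]
    nlinarith [hslice]
  have hev2 : ∀ᶠ x : ℝ in atTop,
      (1 : ℝ) ≤ (ℙ {ω | x - y < X 0 ω}).toReal / (ℙ {ω | x < X 0 ω}).toReal := by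
    filter_upwards [eventually_ge_atTop y] with x hx
    rw [le_div_iff₀ (hFbpos x)]
    simpa using tail_antitone (x - y) x (by linarith)
  exact tendsto_of_tendsto_of_tendsto_of_le_of_le' tendsto_const_nhds hUlim hev2 hev


lemma ratio_lower (hmeas : ∀ i, Measurable (X i))
    (hindep : iIndepFun X ℙ)
    (hident : ∀ i, IdentDistrib (X i) (X 0) ℙ ℙ)
    (hnonneg : ∀ i ω, 0 ≤ X i ω)
    (htail_pos : ∀ x : ℝ, 0 < ℙ {ω | x < X 0 ω})
    (n : ℕ) (hn : 1 ≤ n) (x : ℝ) :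
    1 - n * (ℙ {ω | x < X 0 ω}).toReal
      ≤ (ℙ {ω | x < partialSum X n ω}).toReal / (n * (ℙ {ω | x < X 0 ω}).toReal) := by
  set t : ℝ := (ℙ {ω | x < X 0 ω}).toReal with hts
  have ht : 0 < t := tail_pos_toReal htail_pos x
  have ht1 : t ≤ 1 := by
    have := prob_le_one (μ := (ℙ : Measure Ω)) (s := {ω | x < X 0 ω})
    calc t ≤ (1 : ℝ≥0∞).toReal := ENNReal.toReal_mono ENNReal.one_ne_top this
      _ = 1 := ENNReal.toReal_one
  have hlow := partialSum_tail_lower hmeas hindep hident hnonneg n x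
  rw [← hts] at hlow
  have hnpos : (0:ℝ) < n := by exact_mod_cast hn
  have hntpos : 0 < (n : ℝ) * t := by positivity
  rw [le_div_iff₀ hntpos]
  -- suffices : (1 - n*t) * (n*t) ≤ 1 - (1-t)^n
  have hkey : (1 - (n:ℝ) * t) * ((n:ℝ) * t) ≤ 1 - (1 - t) ^ n := by
    have h1 : (1 - t) ^ n * (1 + t) ^ n ≤ 1 := by
      rw [← mul_pow]
      have he : (1 - t) * (1 + t) = 1 - t ^ 2 := by ring
      rw [he]
      exact pow_le_one₀ (by nlinarith) (by nlinarith)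
    have h2 : 1 + (n:ℝ) * t ≤ (1 + t) ^ n := one_add_mul_le_pow (by linarith) n
    have h3 : (0:ℝ) ≤ (1 - t) ^ n := pow_nonneg (by linarith) n
    have h4 : (1 - t) ^ n * (1 + (n:ℝ) * t) ≤ 1 :=
      le_trans (mul_le_mul_of_nonneg_left h2 h3) h1
    nlinarith [h4, hntpos, sq_nonneg ((n:ℝ)*t)]
  calc (1 - (n:ℝ) * t) * ((n:ℝ) * t) ≤ 1 - (1 - t) ^ n := hkey
    _ ≤ (ℙ {ω | x < partialSum X n ω}).toReal := hlow

lemma ratio_upper (hmeas : ∀ i, Measurable (X i))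
    (hindep : iIndepFun X ℙ)
    (hident : ∀ i, IdentDistrib (X i) (X 0) ℙ ℙ)
    (hnonneg : ∀ i ω, 0 ≤ X i ω)
    (htail_pos : ∀ x : ℝ, 0 < ℙ {ω | x < X 0 ω})
    {γ : ℕ → ℝ}
    (hsup : ∀ ε > (0 : ℝ), ∀ᶠ k : ℕ in atTop, ∀ x : ℝ, γ k < x →
        (ℙ {ω | x < partialSum X k ω}).toReal / (k * (ℙ {ω | x < X 0 ω}).toReal) ≤ 1 + ε)
    (n : ℕ) (hn : 1 ≤ n) (ε : ℝ) (hε : 0 < ε) :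
    ∀ᶠ x : ℝ in atTop, (ℙ {ω | x < partialSum X n ω}).toReal
      ≤ (1 + ε) * (n * (ℙ {ω | x < X 0 ω}).toReal) := by
  set Fb : ℝ → ℝ := fun x => (ℙ {ω | x < X 0 ω}).toReal with hFbdef
  have hFbpos : ∀ x, 0 < Fb x := tail_pos_toReal htail_pos
  have hFb0 : Tendsto Fb atTop (𝓝 0) := tail_tendsto_zero (hmeas 0)
  by_contra hcon
  rw [Filter.not_eventually] at hcon
  have hclaim : ∀ j : ℕ, ∃ᶠ x : ℝ in atTop,
      (1 + (ε/2 + ε/2^(j+1))) * ((n * 2^j : ℕ) * Fb x)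
        ≤ (ℙ {ω | x < partialSum X (n * 2^j) ω}).toReal := by
    intro j
    induction j with
    | zero =>
      refine hcon.mono ?_
      intro x hx
      rw [not_le] at hx
      have hidx : n * 2^0 = n := by norm_num
      rw [hidx]
      have he : (ε/2 + ε/2^(0+1)) = ε := by norm_num
      rw [he]
      exact hx.le
    | succ j ih =>
      set m : ℕ := n * 2^j with hm
      have hmpos : 1 ≤ m := Nat.one_le_iff_ne_zero.2 (Nat.mul_ne_zero (by omega) (by positivity))
      set c : ℝ := ε/2 + ε/2^(j+1) with hc
      set c' : ℝ := ε/2 + ε/2^(j+2) with hc'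
      have hcpos : 0 < c := by positivity
      have hc'pos : 0 < c' := by positivity
      have hcc' : 0 < c - c' := by
        rw [hc, hc']
        have : (ε/2^(j+2)) < ε/2^(j+1) := by
          apply div_lt_div_of_pos_left hε (by positivity)
          exact pow_lt_pow_right₀ (by norm_num) (by omega)
        linarith
      have hsmall : ∀ᶠ x : ℝ in atTop,
          (1 + c) * ((m:ℝ) * Fb x) ≤ 2 * (c - c') / (1 + c) := by
        have htend : Tendsto (fun x => (1 + c) * ((m:ℝ) * Fb x)) atTop (𝓝 0) := by
          have := (hFb0.const_mul (m:ℝ)).const_mul (1 + c)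
          simpa using this
        exact htend.eventually_le_const (by positivity)
      refine ((ih.and_eventually hsmall).mono ?_)
      rintro x ⟨hq, hsm⟩
      set p : ℝ := (ℙ {ω | x < partialSum X m ω}).toReal with hp
      set q : ℝ := (1 + c) * ((m:ℝ) * Fb x) with hqdef
      have hqpos : 0 < q := by
        have := hFbpos x
        have : (0:ℝ) < (m:ℝ) := by exact_mod_cast hmpos
        rw [hqdef]
        positivity
      have hp1 : p ≤ 1 := by
        rw [hp]
        calc (ℙ {ω | x < partialSum X m ω}).toReal
            ≤ (1 : ℝ≥0∞).toReal := ENNReal.toReal_mono ENNReal.one_ne_top prob_le_one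
          _ = 1 := ENNReal.toReal_one
      have hqp : q ≤ p := hq
      have hdou := doubling hmeas hindep hident hnonneg m x
      rw [← hp] at hdou
      have hmono : q * (2 - q) ≤ 2 * p - p ^ 2 := by nlinarith [hqp, hp1, hqpos]
      have hkey : (1 + c') * (((n * 2^(j+1) : ℕ) : ℝ) * Fb x) ≤ q * (2 - q) := by
        have hcast : ((n * 2^(j+1) : ℕ) : ℝ) = 2 * (m:ℝ) := by
          rw [hm]; push_cast; ring
        rw [hcast, hqdef]
        -- (1+c')*(2*m*Fb) ≤ (1+c)*(m*Fb)*(2 − (1+c)*(m*Fb))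
        have hq' : (1 + c) * ((m:ℝ) * Fb x) ≤ 2 * (c - c') / (1 + c) := hsm
        have h1c : (0:ℝ) < 1 + c := by linarith
        have hr : 0 < (m:ℝ) * Fb x := by
          have h1 : (0:ℝ) < (m:ℝ) := by exact_mod_cast hmpos
          have := hFbpos x
          positivity
        rw [le_div_iff₀ h1c] at hq'
        nlinarith [mul_le_mul_of_nonneg_right hq' hr.le, hr]
      have hidx : n * 2^(j+1) = 2 * m := by rw [hm]; ring
      calc (1 + c') * (((n * 2^(j+1) : ℕ) : ℝ) * Fb x)
          ≤ q * (2 - q) := hkey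
        _ ≤ 2 * p - p ^ 2 := hmono
        _ ≤ (ℙ {ω | x < partialSum X (2 * m) ω}).toReal := hdou
        _ = (ℙ {ω | x < partialSum X (n * 2^(j+1)) ω}).toReal := by rw [hidx]
  obtain ⟨N, hN⟩ := eventually_atTop.1 (hsup (ε/4) (by positivity))
  set m : ℕ := n * 2^N with hmdef
  have hmN : N ≤ m := by
    calc N ≤ 2^N := (Nat.lt_two_pow_self (n := N)).le
      _ ≤ n * 2^N := Nat.le_mul_of_pos_left _ hn
  have hmpos : 1 ≤ m := Nat.one_le_iff_ne_zero.2 (Nat.mul_ne_zero (by omega) (by positivity))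
  obtain ⟨x, hx1, hx2⟩ := ((hclaim N).and_eventually (eventually_gt_atTop (γ m))).exists
  have hratio := hN m hmN x hx2
  have hmFb : 0 < (m:ℝ) * Fb x := by
    have h1 : (0:ℝ) < (m:ℝ) := by exact_mod_cast hmpos
    have := hFbpos x
    positivity
  rw [div_le_iff₀ hmFb] at hratio
  have hcoef : 1 + ε/2 ≤ 1 + (ε/2 + ε/2^(N+1)) := by
    have : (0:ℝ) < ε/2^(N+1) := by positivity
    linarith
  have hchain : (1 + ε/2) * ((m:ℝ) * Fb x) ≤ (1 + ε/4) * ((m:ℝ) * Fb x) := by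
    calc (1 + ε/2) * ((m:ℝ) * Fb x)
        ≤ (1 + (ε/2 + ε/2^(N+1))) * ((m:ℝ) * Fb x) :=
          mul_le_mul_of_nonneg_right hcoef hmFb.le
      _ ≤ (ℙ {ω | x < partialSum X m ω}).toReal := hx1
      _ ≤ (1 + ε/4) * ((m:ℝ) * Fb x) := hratio
  nlinarith [hchain, hmFb, hε]

end Aux


/-- Let `F` (the common distribution of the i.i.d. nonnegative
sequence `(X_i)`, with `F(x) < 1` for all `x`) be a distribution on `(0,∞)`. Then `F` is
subexponential (i.e. `P(S_n > x)/(n F̄(x)) → 1` as `x → ∞` for every `n ≥ 2`)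
if and only if both:
(i) `F` is long-tailed: `F̄(x+y)/F̄(x) → 1` as `x → ∞` for every real `y`; and
(ii) there exists `γ_n → ∞` with `limsup_n sup_{x > γ_n} P(S_n > x)/(n F̄(x)) ≤ 1`. -/
theorem stmt2 {Ω : Type*} [MeasureSpace Ω] [IsProbabilityMeasure (ℙ : Measure Ω)]
    (X : ℕ → Ω → ℝ) (hmeas : ∀ i, Measurable (X i))
    (hindep : iIndepFun X ℙ)
    (hident : ∀ i, IdentDistrib (X i) (X 0) ℙ ℙ)
    (hnonneg : ∀ i ω, 0 ≤ X i ω)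
    (htail_pos : ∀ x : ℝ, 0 < ℙ {ω | x < X 0 ω}) :
    (∀ n : ℕ, 2 ≤ n →
        Tendsto (fun x : ℝ =>
            (ℙ {ω | x < partialSum X n ω}).toReal / (n * (ℙ {ω | x < X 0 ω}).toReal))
          atTop (𝓝 1))
      ↔ ((∀ y : ℝ,
            Tendsto (fun x : ℝ =>
                (ℙ {ω | x + y < X 0 ω}).toReal / (ℙ {ω | x < X 0 ω}).toReal)
              atTop (𝓝 1)) ∧
         (∃ γ : ℕ → ℝ, Tendsto γ atTop atTop ∧
            ∀ ε > (0 : ℝ), ∀ᶠ n : ℕ in atTop, ∀ x : ℝ, γ n < x →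
              (ℙ {ω | x < partialSum X n ω}).toReal / (n * (ℙ {ω | x < X 0 ω}).toReal)
                ≤ 1 + ε)) := by
  constructor
  · intro hsub
    refine ⟨?_, ?_⟩
    · intro y
      have h2 := hsub 2 le_rfl
      have h2' : Tendsto (fun x : ℝ => (ℙ {ω | x < partialSum X 2 ω}).toReal
          / (2 * (ℙ {ω | x < X 0 ω}).toReal)) atTop (𝓝 1) := by
        simpa using h2
      rcases le_or_gt 0 y with hy | hy
      · have hneg := longtail_of_subexp2 hmeas hindep hident hnonneg htail_pos h2' y hy
        have hcomp := hneg.comp (tendsto_atTop_add_const_right atTop y tendsto_id)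
        have hinv := hcomp.inv₀ one_ne_zero
        rw [inv_one] at hinv
        refine hinv.congr ?_
        intro x
        simp only [Function.comp, id]
        have hxy : x + y - y = x := by ring
        rw [hxy, inv_div]
      · have h := longtail_of_subexp2 hmeas hindep hident hnonneg htail_pos h2' (-y)
          (by linarith)
        refine h.congr ?_
        intro x
        rw [sub_neg_eq_add]
    · have hM : ∀ n : ℕ, ∃ M : ℝ, ∀ x : ℝ, M < x →
          (2 ≤ n → (ℙ {ω | x < partialSum X n ω}).toReal
            / (n * (ℙ {ω | x < X 0 ω}).toReal) ≤ 1 + 1/n) := by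
        intro n
        by_cases hn2 : 2 ≤ n
        · have hnpos : (0:ℝ) < n := by exact_mod_cast (by omega : 0 < n)
          have h := (hsub n hn2).eventually_le_const
            (show (1:ℝ) < 1 + 1/n by
              have : (0:ℝ) < 1/n := by positivity
              linarith)
          obtain ⟨M, hMev⟩ := eventually_atTop.1 h
          exact ⟨M, fun x hx _ => hMev x hx.le⟩
        · exact ⟨0, fun x _ h => absurd h hn2⟩
      choose M hM using hM
      refine ⟨fun k => max (k : ℝ) (M k), ?_, ?_⟩
      · exact tendsto_atTop_mono (fun k => le_max_left (k:ℝ) (M k))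
          tendsto_natCast_atTop_atTop
      · intro ε hε
        obtain ⟨K0, hK0⟩ := exists_nat_gt (1/ε)
        have hK0pos : (0:ℝ) < K0 := lt_of_le_of_lt (by positivity) hK0
        filter_upwards [eventually_ge_atTop (max 2 K0)] with k hk x hx
        have hk2 : 2 ≤ k := le_trans (le_max_left _ _) hk
        have hkK0 : K0 ≤ k := le_trans (le_max_right _ _) hk
        have h := hM k x (lt_of_le_of_lt (le_max_right _ _) hx) hk2
        have hkR : (0:ℝ) < k := lt_of_lt_of_le hK0pos (by exact_mod_cast hkK0)
        have h1k : (1:ℝ)/k ≤ ε := by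
          calc (1:ℝ)/k ≤ 1/K0 := by
                apply one_div_le_one_div_of_le hK0pos
                exact_mod_cast hkK0
            _ ≤ ε := ((one_div_lt hK0pos hε).mpr hK0).le
        linarith
  · rintro ⟨_hlong, γ, _hγ, hsup⟩
    intro n hn
    have hn1 : 1 ≤ n := le_trans (by norm_num) hn
    have hFb0 : Tendsto (fun x : ℝ => (ℙ {ω | x < X 0 ω}).toReal) atTop (𝓝 0) :=
      tail_tendsto_zero (hmeas 0)
    have hFbpos := tail_pos_toReal htail_pos
    rw [tendsto_order]
    constructor
    · intro b hb
      have htt : Tendsto (fun x : ℝ => (n:ℝ) * (ℙ {ω | x < X 0 ω}).toReal) atTop (𝓝 0) := by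
        have := hFb0.const_mul (n:ℝ)
        simpa using this
      have hev := htt.eventually_lt_const (show (0:ℝ) < 1 - b by linarith)
      filter_upwards [hev] with x hx
      have hl := ratio_lower hmeas hindep hident hnonneg htail_pos n hn1 x
      linarith
    · intro b hb
      have hup := ratio_upper hmeas hindep hident hnonneg htail_pos hsup n hn1
        ((b-1)/2) (by linarith)
      filter_upwards [hup] with x hx
      have hnpos : (0:ℝ) < n := by exact_mod_cast (by omega : 0 < n)
      have hpos : 0 < (n:ℝ) * (ℙ {ω | x < X 0 ω}).toReal := by
        have := hFbpos x
        positivity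
      rw [div_lt_iff₀ hpos]
      nlinarith [hx, hpos]
end

section
/- Let F be a subexponential distribution function and let (X_i) be i.i.d. with distribution F. Then there exists a sequence γ_n → ∞ such that sup_{x > γ_n} | P(S_n > x)/(n F̄(x)) − 1 | → 0 as n → ∞. -/
open MeasureTheory ProbabilityTheory Filter Topology Real

/-- If the common distribution `F` of the i.i.d. nonnegative sequence
`(X_i)` is subexponential (i.e. `P(S_n > x)/(n F̄(x)) → 1` as `x → ∞` for every `n ≥ 2`),
then there exists a sequence `γ_n → ∞` such that
`sup_{x > γ_n} |P(S_n > x)/(n F̄(x)) - 1| → 0` as `n → ∞`. -/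
theorem stmt3 {Ω : Type*} [MeasureSpace Ω] [IsProbabilityMeasure (ℙ : Measure Ω)]
    (X : ℕ → Ω → ℝ) (hmeas : ∀ i, Measurable (X i))
    (hindep : iIndepFun X ℙ)
    (hident : ∀ i, IdentDistrib (X i) (X 0) ℙ ℙ)
    (hnonneg : ∀ i ω, 0 ≤ X i ω)
    (htail_pos : ∀ x : ℝ, 0 < ℙ {ω | x < X 0 ω})
    (hsubexp : ∀ n : ℕ, 2 ≤ n →
      Tendsto (fun x : ℝ =>
          (ℙ {ω | x < partialSum X n ω}).toReal / (n * (ℙ {ω | x < X 0 ω}).toReal))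
        atTop (𝓝 1)) :
    ∃ γ : ℕ → ℝ, Tendsto γ atTop atTop ∧
      ∀ ε > (0 : ℝ), ∀ᶠ n : ℕ in atTop, ∀ x : ℝ, γ n < x →
        |(ℙ {ω | x < partialSum X n ω}).toReal / (n * (ℙ {ω | x < X 0 ω}).toReal) - 1|
          < ε := by
  have key : ∀ n : ℕ, ∃ a : ℝ, 2 ≤ n → ∀ x ≥ a,
      |(ℙ {ω | x < partialSum X n ω}).toReal / (n * (ℙ {ω | x < X 0 ω}).toReal) - 1|
        < 1 / (n + 1) := by
    intro n
    by_cases hn : 2 ≤ n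
    · have h := hsubexp n hn
      rw [Metric.tendsto_nhds] at h
      have h2 := h (1 / (n + 1)) (by positivity)
      rw [eventually_atTop] at h2
      obtain ⟨a, ha⟩ := h2
      exact ⟨a, fun _ x hx => by simpa [Real.dist_eq] using ha x hx⟩
    · exact ⟨0, fun h => absurd h hn⟩
  choose a ha using key
  refine ⟨fun n => max (a n) n, ?_, ?_⟩
  · exact tendsto_atTop_mono (fun n => le_max_right _ _) tendsto_natCast_atTop_atTop
  · intro ε hε
    obtain ⟨N, hN⟩ := exists_nat_gt (1 / ε)
    filter_upwards [eventually_ge_atTop (max 2 N)] with n hn x hx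
    have hn2 : 2 ≤ n := le_trans (le_max_left _ _) hn
    have hnN : N ≤ n := le_trans (le_max_right _ _) hn
    have hbound := ha n hn2 x (le_of_lt (lt_of_le_of_lt (le_max_left _ _) hx))
    have h1 : (1 : ℝ) / (n + 1) < ε := by
      rw [div_lt_iff₀ (by positivity)]
      have : (1 : ℝ) / ε < n + 1 := lt_of_lt_of_le hN (by exact_mod_cast Nat.le_succ_of_le hnN)
      calc (1 : ℝ) = ε * (1 / ε) := by field_simp
        _ < ε * (n + 1) := by exact mul_lt_mul_of_pos_left this hε
    exact lt_trans hbound h1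
end

section
/- Let (X_i) be i.i.d. real random variables with E[X] = 0 and Var(X) = 1 such that for some sequence γ_n → ∞, sup_{0 ≤ x < γ_n} | P(S_n/√n > x)/Φ̄(x) − 1 | → 0 and sup_{0 ≤ x < γ_n} | P(−S_n/√n > x)/Φ̄(x) − 1 | → 0 as n → ∞. Let (p_n) be any integer sequence with p = p_n → ∞ and p_n < exp(γ_n²/2), and let (S_{ni})_{i=1,...,p} be i.i.d. copies of S_n. Then for all x, y ∈ ℝ, P( max_{i=1,...,p} d_p (S_{ni}/√n − d_p) ≤ x , min_{i=1,...,p} d_p (S_{ni}/√n + d_p) ≤ y ) → Λ(x)(1 − Λ(−y)) as n → ∞, where d_p = √(2 log p) − (log log p + log 4π)/(2 (2 log p)^{1/2}) and Λ(x) = exp(−e^{−x}). -/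
open MeasureTheory ProbabilityTheory Filter Topology Real

/-- The tail `Φ̄(x) = 1 - Φ(x)` of the standard normal distribution function. -/
noncomputable def stdNormalTail (x : ℝ) : ℝ := ((gaussianReal 0 1) (Set.Ioi x)).toReal

/-- The Gumbel centering constants
`d_p = √(2 log p) − (log log p + log 4π)/(2 (2 log p)^{1/2})`. -/
noncomputable def gumbelCenter (p : ℕ) : ℝ :=
  Real.sqrt (2 * Real.log p)
    - (Real.log (Real.log p) + Real.log (4 * Real.pi)) / (2 * Real.sqrt (2 * Real.log p))

/-- The standard Gumbel distribution function `Λ(x) = exp(−e^{−x})`. -/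
noncomputable def gumbelCDF (x : ℝ) : ℝ := Real.exp (-Real.exp (-x))

section MillsPrep
open MeasureTheory ProbabilityTheory Filter Topology Real Set

noncomputable def nPhi (x : ℝ) : ℝ := (Real.sqrt (2 * π))⁻¹ * Real.exp (-x ^ 2 / 2)

lemma nPhi_pos (x : ℝ) : 0 < nPhi x := by
  have : (0:ℝ) < Real.sqrt (2 * π) := Real.sqrt_pos.2 (by positivity)
  exact mul_pos (inv_pos.2 this) (Real.exp_pos _)

lemma gaussianPDFReal_eq : gaussianPDFReal 0 1 = nPhi := by
  ext x
  simp [gaussianPDFReal, nPhi]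

lemma stdNormalTail_eq (x : ℝ) : stdNormalTail x = ∫ u in Set.Ioi x, nPhi u := by
  rw [stdNormalTail, gaussianReal_apply_eq_integral 0 one_ne_zero, ENNReal.toReal_ofReal,
    gaussianPDFReal_eq]
  rw [gaussianPDFReal_eq]
  exact integral_nonneg fun u => (nPhi_pos u).le

lemma integrable_nPhi : Integrable nPhi := by
  rw [← gaussianPDFReal_eq]; exact integrable_gaussianPDFReal 0 1

lemma continuous_nPhi : Continuous nPhi := by
  unfold nPhi; fun_prop

lemma hasDerivAt_nPhi_aux (u : ℝ) :
    HasDerivAt (fun v : ℝ => Real.exp (-v ^ 2 / 2)) (Real.exp (-u ^ 2 / 2) * (-u)) u := by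
  have h1 : HasDerivAt (fun v : ℝ => -v ^ 2 / 2) (-u) u := by
    have := ((hasDerivAt_pow 2 u).neg).div_const 2
    simpa using this.congr_deriv (by ring)
  simpa using h1.exp

lemma tendsto_nPhi_atTop : Tendsto nPhi atTop (𝓝 0) := by
  have h : Tendsto (fun v : ℝ => -v ^ 2 / 2) atTop atBot := by
    apply Filter.Tendsto.atBot_div_const (by norm_num)
    exact tendsto_neg_atTop_atBot.comp (tendsto_pow_atTop two_ne_zero)
  have := Real.tendsto_exp_atBot.comp h
  have h2 : Tendsto (fun v : ℝ => Real.exp (-v ^ 2 / 2)) atTop (𝓝 0) := this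
  unfold nPhi
  simpa only [mul_zero] using h2.const_mul (Real.sqrt (2 * π))⁻¹

end MillsPrep

section Mills
open MeasureTheory Filter Topology Real Set

lemma hasDerivAt_nPhi (u : ℝ) : HasDerivAt nPhi (nPhi u * (-u)) u := by
  have h := (hasDerivAt_nPhi_aux u).const_mul (Real.sqrt (2 * π))⁻¹
  have : nPhi = fun v => (Real.sqrt (2 * π))⁻¹ * Real.exp (-v ^ 2 / 2) := rfl
  rw [this]
  refine h.congr_deriv ?_
  simp [nPhi]; ring

lemma integrableOn_nPhi_Ioi (t : ℝ) : IntegrableOn nPhi (Set.Ioi t) :=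
  integrable_nPhi.integrableOn

lemma stdNormalTail_le_mills {t : ℝ} (ht : 0 < t) : stdNormalTail t ≤ nPhi t * t⁻¹ := by
  set f' : ℝ → ℝ := fun u => nPhi u * (1 + (u⁻¹) ^ 2) with hf'
  have hmeasf' : Measurable f' :=
    continuous_nPhi.measurable.mul (measurable_const.add (measurable_inv.pow_const 2))
  have hint : IntegrableOn f' (Set.Ioi t) := by
    refine Integrable.mono ((integrable_nPhi.const_mul (1 + (t⁻¹) ^ 2)).integrableOn)
      hmeasf'.aestronglyMeasurable ?_
    rw [ae_restrict_iff' measurableSet_Ioi]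
    filter_upwards with u hu
    have hu0 : 0 < u := ht.trans hu
    have h1 : u⁻¹ ≤ t⁻¹ := inv_anti₀ ht (le_of_lt hu)
    have h2 : (u⁻¹) ^ 2 ≤ (t⁻¹) ^ 2 := by
      apply pow_le_pow_left₀ (by positivity) h1
    have h3 : (0:ℝ) < 1 + (u⁻¹) ^ 2 := by positivity
    rw [Real.norm_eq_abs, Real.norm_eq_abs, abs_of_pos (mul_pos (nPhi_pos u) h3),
      abs_of_pos (mul_pos (by positivity) (nPhi_pos u))]
    rw [mul_comm (1 + (t⁻¹)^2)]
    exact mul_le_mul_of_nonneg_left (by linarith) (nPhi_pos u).le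
  have hderiv : ∀ u ∈ Set.Ici t, HasDerivAt (fun v => -(nPhi v * v⁻¹)) (f' u) u := by
    intro u hu
    have hu0 : 0 < u := lt_of_lt_of_le ht hu
    have h := ((hasDerivAt_nPhi u).mul (hasDerivAt_inv hu0.ne')).neg
    refine h.congr_deriv ?_
    rw [hf']
    field_simp [hf']
    ring
  have htend : Tendsto (fun v => -(nPhi v * v⁻¹)) atTop (𝓝 0) := by
    have := (tendsto_nPhi_atTop.mul tendsto_inv_atTop_zero).neg
    simpa using this
  have key : ∫ u in Set.Ioi t, f' u = nPhi t * t⁻¹ := by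
    rw [integral_Ioi_of_hasDerivAt_of_tendsto' hderiv hint htend]
    ring
  calc stdNormalTail t = ∫ u in Set.Ioi t, nPhi u := stdNormalTail_eq t
    _ ≤ ∫ u in Set.Ioi t, f' u := by
        refine setIntegral_mono_on (integrableOn_nPhi_Ioi t) hint measurableSet_Ioi ?_
        intro u _
        show nPhi u ≤ nPhi u * (1 + u⁻¹ ^ 2)
        have := nPhi_pos u
        nlinarith [sq_nonneg u⁻¹]
    _ = nPhi t * t⁻¹ := key

lemma mills_le_stdNormalTail {t : ℝ} (ht : 0 < t) :
    nPhi t * t * (t ^ 2 + 1)⁻¹ ≤ stdNormalTail t := by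
  set g' : ℝ → ℝ := fun u => nPhi u * ((u ^ 4 + 2 * u ^ 2 - 1) / (u ^ 2 + 1) ^ 2) with hg'
  have hmeasg' : Measurable g' := by
    apply continuous_nPhi.measurable.mul
    fun_prop
  have hbound : ∀ u : ℝ, |g' u| ≤ nPhi u := by
    intro u
    rw [hg', abs_mul, abs_of_pos (nPhi_pos u)]
    have h1 : |(u ^ 4 + 2 * u ^ 2 - 1) / (u ^ 2 + 1) ^ 2| ≤ 1 := by
      rw [abs_div, div_le_one (by positivity)]
      rw [abs_of_pos (by positivity : (0:ℝ) < (u ^ 2 + 1) ^ 2)]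
      rw [abs_le]
      constructor <;> nlinarith [sq_nonneg u, sq_nonneg (u^2)]
    calc nPhi u * |(u ^ 4 + 2 * u ^ 2 - 1) / (u ^ 2 + 1) ^ 2| ≤ nPhi u * 1 :=
          mul_le_mul_of_nonneg_left h1 (nPhi_pos u).le
      _ = nPhi u := mul_one _
  have hint : IntegrableOn g' (Set.Ioi t) := by
    refine Integrable.mono (integrableOn_nPhi_Ioi t) hmeasg'.aestronglyMeasurable ?_
    filter_upwards with u
    rw [Real.norm_eq_abs, Real.norm_eq_abs, abs_of_pos (nPhi_pos u)]
    exact hbound u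
  have hderiv : ∀ u ∈ Set.Ici t, HasDerivAt (fun v => -(nPhi v * v * (v ^ 2 + 1)⁻¹)) (g' u) u := by
    intro u _
    have hne : (u ^ 2 + 1 : ℝ) ≠ 0 := by positivity
    have hA : HasDerivAt (fun v : ℝ => nPhi v * v) (nPhi u * (-u) * u + nPhi u * 1) u :=
      (hasDerivAt_nPhi u).mul (hasDerivAt_id u)
    have hB : HasDerivAt (fun v : ℝ => (v ^ 2 + 1)⁻¹)
        (-(2 * u ^ 1) / (u ^ 2 + 1) ^ 2) u := by
      exact ((hasDerivAt_pow 2 u).add_const 1).inv hne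
    have h := (hA.mul hB).neg
    refine h.congr_deriv ?_
    rw [hg']
    field_simp
    ring
  have htend : Tendsto (fun v => -(nPhi v * v * (v ^ 2 + 1)⁻¹)) atTop (𝓝 0) := by
    apply tendsto_of_tendsto_of_tendsto_of_le_of_le'
      (by simpa using tendsto_nPhi_atTop.neg) (tendsto_const_nhds (x := (0:ℝ)))
    · filter_upwards [Filter.eventually_ge_atTop (0:ℝ)] with u hu
      have h1 : nPhi u * u * (u ^ 2 + 1)⁻¹ ≤ nPhi u := by
        rw [mul_assoc]
        have : u * (u ^ 2 + 1)⁻¹ ≤ 1 := by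
          rw [mul_inv_le_iff₀ (show (0:ℝ) < u ^ 2 + 1 by positivity)]
          nlinarith
        nlinarith [nPhi_pos u]
      linarith
    · filter_upwards [Filter.eventually_ge_atTop (0:ℝ)] with u hu
      have : 0 ≤ nPhi u * u * (u ^ 2 + 1)⁻¹ :=
        mul_nonneg (mul_nonneg (nPhi_pos u).le hu) (inv_nonneg.2 (by positivity))
      linarith
  have key : ∫ u in Set.Ioi t, g' u = nPhi t * t * (t ^ 2 + 1)⁻¹ := by
    rw [integral_Ioi_of_hasDerivAt_of_tendsto' hderiv hint htend]
    ring
  calc nPhi t * t * (t ^ 2 + 1)⁻¹ = ∫ u in Set.Ioi t, g' u := key.symm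
    _ ≤ ∫ u in Set.Ioi t, nPhi u := by
        refine setIntegral_mono_on hint (integrableOn_nPhi_Ioi t) measurableSet_Ioi ?_
        intro u _
        have h := hbound u
        have := abs_le.1 h
        linarith [this.1, this.2]
    _ = stdNormalTail t := (stdNormalTail_eq t).symm

lemma stdNormalTail_pos {t : ℝ} (ht : 0 < t) : 0 < stdNormalTail t :=
  lt_of_lt_of_le (mul_pos (mul_pos (nPhi_pos t) ht) (by positivity))
    (mills_le_stdNormalTail ht)

end Mills

section Asymp
open MeasureTheory Filter Topology Real Set

noncomputable def Lk (k : ℕ) : ℝ := Real.log k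
noncomputable def sk (k : ℕ) : ℝ := Real.sqrt (2 * Lk k)
noncomputable def ak (k : ℕ) : ℝ := (Real.log (Lk k) + Real.log (4 * π)) / 2
noncomputable def tc (c : ℝ) (k : ℕ) : ℝ := gumbelCenter k + c / gumbelCenter k

lemma gumbel_eq (k : ℕ) : gumbelCenter k = sk k - ak k / sk k := by
  rw [gumbelCenter, sk, ak, Lk]
  ring

lemma hL : Tendsto Lk atTop atTop :=
  Real.tendsto_log_atTop.comp tendsto_natCast_atTop_atTop

lemma tendsto_sqrt_atTop : Tendsto Real.sqrt atTop atTop := by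
  refine Tendsto.congr' ?_ (tendsto_rpow_atTop (by norm_num : (0:ℝ) < 1/2))
  filter_upwards [Filter.eventually_ge_atTop (0:ℝ)] with x hx
  exact (Real.sqrt_eq_rpow x).symm

lemma hs : Tendsto sk atTop atTop :=
  _root_.tendsto_sqrt_atTop.comp (hL.const_mul_atTop two_pos)

lemma hlogdiv : Tendsto (fun x : ℝ => Real.log x / x) atTop (𝓝 0) := by
  have := Real.tendsto_pow_log_div_mul_add_atTop 1 0 1 one_ne_zero
  simpa using this

lemma h_as : Tendsto (fun k => ak k / sk k) atTop (𝓝 0) := by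
  have hF : Tendsto (fun s : ℝ => Real.log s / s + ((Real.log (4 * π) - Real.log 2) / 2) * s⁻¹)
      atTop (𝓝 0) := by
    have h2 := tendsto_inv_atTop_zero.const_mul ((Real.log (4 * π) - Real.log 2) / 2)
    simpa using hlogdiv.add h2
  refine Tendsto.congr' ?_ (hF.comp hs)
  filter_upwards [hL.eventually (Filter.eventually_gt_atTop (1:ℝ))] with k hk1
  have hLpos : (0:ℝ) < Lk k := lt_trans one_pos hk1
  have hskpos : (0:ℝ) < sk k := Real.sqrt_pos.2 (by linarith)
  have hlogsk : Real.log (sk k) = (Real.log 2 + Real.log (Lk k)) / 2 := by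
    rw [sk, Real.log_sqrt (by linarith), Real.log_mul two_ne_zero hLpos.ne']
  simp only [Function.comp_apply]
  rw [hlogsk, ak]
  field_simp
  ring

lemma h_d_s : Tendsto (fun k => gumbelCenter k / sk k) atTop (𝓝 1) := by
  have h0 : Tendsto (fun k => (ak k / sk k) * (sk k)⁻¹) atTop (𝓝 0) := by
    simpa using h_as.mul hs.inv_tendsto_atTop
  have h1 : Tendsto (fun k => 1 - (ak k / sk k) * (sk k)⁻¹) atTop (𝓝 1) := by
    simpa using (tendsto_const_nhds (x := (1:ℝ))).sub h0
  refine Tendsto.congr' ?_ h1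
  filter_upwards [hs.eventually (Filter.eventually_gt_atTop (0:ℝ))] with k hsk
  rw [gumbel_eq]
  field_simp

lemma h_d : Tendsto gumbelCenter atTop atTop := by
  have h := hs.atTop_mul_pos one_pos h_d_s
  refine Tendsto.congr' ?_ h
  filter_upwards [hs.eventually (Filter.eventually_gt_atTop (0:ℝ))] with k hsk
  field_simp

lemma h_t_d (c : ℝ) : Tendsto (fun k => tc c k / gumbelCenter k) atTop (𝓝 1) := by
  have h0 : Tendsto (fun k => c * ((gumbelCenter k)⁻¹ * (gumbelCenter k)⁻¹)) atTop (𝓝 0) := by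
    simpa using (h_d.inv_tendsto_atTop.mul h_d.inv_tendsto_atTop).const_mul c
  have h1 : Tendsto (fun k => 1 + c * ((gumbelCenter k)⁻¹ * (gumbelCenter k)⁻¹)) atTop (𝓝 1) := by
    simpa using (tendsto_const_nhds (x := (1:ℝ))).add h0
  refine Tendsto.congr' ?_ h1
  filter_upwards [h_d.eventually (Filter.eventually_gt_atTop (0:ℝ))] with k hd
  rw [tc]
  field_simp

lemma h_t (c : ℝ) : Tendsto (tc c) atTop atTop := by
  have h := h_d.atTop_mul_pos one_pos (h_t_d c)
  refine Tendsto.congr' ?_ h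
  filter_upwards [h_d.eventually (Filter.eventually_gt_atTop (0:ℝ))] with k hd
  field_simp

lemma h_s_t (c : ℝ) : Tendsto (fun k => sk k / tc c k) atTop (𝓝 1) := by
  have h1 : Tendsto (fun k => (gumbelCenter k / sk k)⁻¹ * (tc c k / gumbelCenter k)⁻¹)
      atTop (𝓝 1) := by
    simpa using (h_d_s.inv₀ one_ne_zero).mul ((h_t_d c).inv₀ one_ne_zero)
  refine Tendsto.congr' ?_ h1
  filter_upwards [h_d.eventually (Filter.eventually_gt_atTop (0:ℝ)),
    (h_t c).eventually (Filter.eventually_gt_atTop (0:ℝ)),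
    hs.eventually (Filter.eventually_gt_atTop (0:ℝ))] with k hd ht hsk
  field_simp

lemma log4pi : Real.log (4 * π) = Real.log 2 + Real.log (2 * π) := by
  rw [← Real.log_mul two_ne_zero (by positivity)]
  norm_num
  ring_nf

lemma hE (c : ℝ) : Tendsto (fun k => Lk k - (tc c k) ^ 2 / 2 - (1/2) * Real.log (2 * π)
    - Real.log (tc c k)) atTop (𝓝 (-c)) := by
  have hlog : Tendsto (fun k => Real.log (sk k / tc c k)) atTop (𝓝 0) := by
    have := (Real.continuousAt_log one_ne_zero).tendsto.comp (h_s_t c)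
    simpa [Function.comp_def] using this
  have has2 : Tendsto (fun k => (ak k / sk k) ^ 2 / 2) atTop (𝓝 0) := by
    have := (h_as.mul h_as).div_const 2
    simpa [sq] using this
  have hcd : Tendsto (fun k => c ^ 2 * ((gumbelCenter k)⁻¹ * (gumbelCenter k)⁻¹) / 2)
      atTop (𝓝 0) := by
    have := ((h_d.inv_tendsto_atTop.mul h_d.inv_tendsto_atTop).const_mul (c^2)).div_const 2
    simpa using this
  have hcomb : Tendsto (fun k => -c + Real.log (sk k / tc c k) - (ak k / sk k) ^ 2 / 2
      - c ^ 2 * ((gumbelCenter k)⁻¹ * (gumbelCenter k)⁻¹) / 2) atTop (𝓝 (-c)) := by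
    have := (((tendsto_const_nhds (x := (-c))).add hlog).sub has2).sub hcd
    simpa using this
  refine Tendsto.congr' ?_ hcomb
  filter_upwards [hL.eventually (Filter.eventually_gt_atTop (1:ℝ)),
    h_d.eventually (Filter.eventually_gt_atTop (0:ℝ)),
    (h_t c).eventually (Filter.eventually_gt_atTop (0:ℝ))] with k hk1 hd ht
  have hLpos : (0:ℝ) < Lk k := lt_trans one_pos hk1
  have hskpos : (0:ℝ) < sk k := Real.sqrt_pos.2 (by linarith)
  have hsksq : sk k ^ 2 = 2 * Lk k := Real.sq_sqrt (by linarith)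
  have hlogsk : Real.log (sk k) = (Real.log 2 + Real.log (Lk k)) / 2 := by
    rw [sk, Real.log_sqrt (by linarith), Real.log_mul two_ne_zero hLpos.ne']
  have hloga : ak k - (1/2) * Real.log (2 * π) = Real.log (sk k) := by
    rw [ak, hlogsk, log4pi]; ring
  have hlogdiv2 : Real.log (sk k / tc c k) = Real.log (sk k) - Real.log (tc c k) :=
    Real.log_div hskpos.ne' ht.ne'
  have hdd : gumbelCenter k = sk k - ak k / sk k := gumbel_eq k
  have htt : tc c k = gumbelCenter k + c / gumbelCenter k := rfl
  -- t^2/2 = Lk - ak + ak^2/(2 sk^2) + c + c^2/(2 d^2)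
  have ht2 : (tc c k) ^ 2 / 2 = Lk k - ak k + (ak k / sk k) ^ 2 / 2 + c
      + c ^ 2 * ((gumbelCenter k)⁻¹ * (gumbelCenter k)⁻¹) / 2 := by
    have e1 : sk k * (ak k / sk k) = ak k := by field_simp
    have e2 : gumbelCenter k ^ 2
        = sk k ^ 2 - 2 * (sk k * (ak k / sk k)) + (ak k / sk k) ^ 2 := by
      rw [hdd]; ring
    rw [e1] at e2
    have e3 : tc c k ^ 2 = gumbelCenter k ^ 2 + 2 * c
        + c ^ 2 * ((gumbelCenter k)⁻¹ * (gumbelCenter k)⁻¹) := by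
      rw [htt]
      field_simp
      ring
    rw [e3]
    linarith [e2, hsksq]
  rw [ht2, hlogdiv2, ← hloga]
  ring
end Asymp

section Asymp2
open MeasureTheory Filter Topology Real Set

lemma sqrt_eq_exp_half_log {x : ℝ} (hx : 0 < x) :
    Real.sqrt x = Real.exp (Real.log x / 2) := by
  rw [← Real.log_sqrt hx.le, Real.exp_log (Real.sqrt_pos.2 hx)]

lemma lemA (c : ℝ) :
    Tendsto (fun k : ℕ => (k : ℝ) * nPhi (tc c k) / tc c k) atTop (𝓝 (Real.exp (-c))) := by
  have h := (Real.continuous_exp.tendsto (-c)).comp (hE c)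
  refine Tendsto.congr' ?_ h
  filter_upwards [(h_t c).eventually (Filter.eventually_gt_atTop (0:ℝ)),
    Filter.eventually_ge_atTop 1] with k ht hk1
  have hkpos : (0:ℝ) < (k:ℝ) := by exact_mod_cast Nat.lt_of_lt_of_le Nat.zero_lt_one hk1
  have h2pi : (0:ℝ) < 2 * π := by positivity
  simp only [Function.comp_apply, Lk]
  rw [nPhi]
  rw [Real.exp_sub, Real.exp_sub, Real.exp_sub, Real.exp_log hkpos, Real.exp_log ht]
  rw [show (1:ℝ)/2 * Real.log (2*π) = Real.log (2*π)/2 by ring, ← sqrt_eq_exp_half_log h2pi]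
  rw [show -tc c k ^ 2 / 2 = -(tc c k ^ 2 / 2) by ring, Real.exp_neg]
  have h1 : Real.exp (tc c k ^ 2 / 2) ≠ 0 := (Real.exp_pos _).ne'
  have h2 : Real.sqrt (2*π) ≠ 0 := (Real.sqrt_pos.2 h2pi).ne'
  field_simp

lemma lemB (c : ℝ) :
    Tendsto (fun k : ℕ => (k : ℝ) * stdNormalTail (tc c k)) atTop (𝓝 (Real.exp (-c))) := by
  have hfrac : Tendsto (fun k : ℕ => (tc c k) ^ 2 / ((tc c k) ^ 2 + 1)) atTop (𝓝 1) := by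
    have hsq : Tendsto (fun k : ℕ => (tc c k) ^ 2 + 1) atTop atTop := by
      apply tendsto_atTop_add_const_right
      have := (h_t c).atTop_mul_atTop₀ (h_t c)
      refine Tendsto.congr' ?_ this
      filter_upwards with k using by ring
    have h1 : Tendsto (fun k : ℕ => 1 - ((tc c k) ^ 2 + 1)⁻¹) atTop (𝓝 1) := by
      simpa using (tendsto_const_nhds (x := (1:ℝ))).sub hsq.inv_tendsto_atTop
    refine Tendsto.congr' ?_ h1
    filter_upwards [(h_t c).eventually (Filter.eventually_gt_atTop (0:ℝ))] with k ht
    have : (tc c k) ^ 2 + 1 ≠ 0 := by positivity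
    field_simp
    ring
  have hlow : Tendsto (fun k : ℕ => ((k : ℝ) * nPhi (tc c k) / tc c k)
      * ((tc c k) ^ 2 / ((tc c k) ^ 2 + 1))) atTop (𝓝 (Real.exp (-c))) := by
    simpa using (lemA c).mul hfrac
  apply tendsto_of_tendsto_of_tendsto_of_le_of_le' hlow (lemA c)
  · filter_upwards [(h_t c).eventually (Filter.eventually_gt_atTop (0:ℝ))] with k ht
    have hb := mills_le_stdNormalTail ht
    have hk0 : (0:ℝ) ≤ (k:ℝ) := Nat.cast_nonneg k
    have : (k : ℝ) * (nPhi (tc c k) * tc c k * ((tc c k) ^ 2 + 1)⁻¹)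
        ≤ (k : ℝ) * stdNormalTail (tc c k) := mul_le_mul_of_nonneg_left hb hk0
    calc (k : ℝ) * nPhi (tc c k) / tc c k * ((tc c k) ^ 2 / ((tc c k) ^ 2 + 1))
        = (k : ℝ) * (nPhi (tc c k) * tc c k * ((tc c k) ^ 2 + 1)⁻¹) := by
          field_simp
      _ ≤ (k : ℝ) * stdNormalTail (tc c k) := this
  · filter_upwards [(h_t c).eventually (Filter.eventually_gt_atTop (0:ℝ))] with k ht
    have hb := stdNormalTail_le_mills ht
    have hk0 : (0:ℝ) ≤ (k:ℝ) := Nat.cast_nonneg k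
    have := mul_le_mul_of_nonneg_left hb hk0
    calc (k : ℝ) * stdNormalTail (tc c k) ≤ (k : ℝ) * (nPhi (tc c k) * (tc c k)⁻¹) := this
      _ = (k : ℝ) * nPhi (tc c k) / tc c k := by ring

lemma hak : Tendsto ak atTop atTop := by
  have h := (tendsto_atTop_add_const_right atTop (Real.log (4 * π))
    (Real.tendsto_log_atTop.comp hL)).atTop_div_const two_pos
  exact h

lemma lemC (c : ℝ) : ∀ᶠ k : ℕ in atTop, tc c k < sk k := by
  filter_upwards [hs.eventually (Filter.eventually_gt_atTop (0:ℝ)),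
    h_d.eventually (Filter.eventually_gt_atTop (0:ℝ)),
    hak.eventually (Filter.eventually_gt_atTop (2 * |c| + 1)),
    h_d_s.eventually (eventually_gt_nhds (by norm_num : (1:ℝ)/2 < 1))]
      with k hsk hd hak2 hds
  have hds2 : sk k / 2 < gumbelCenter k := by
    have := (lt_div_iff₀ hsk).1 hds
    linarith
  have hkey : c / gumbelCenter k < ak k / sk k := by
    have h1 : c / gumbelCenter k ≤ |c| / gumbelCenter k :=
      (div_le_div_iff_of_pos_right hd).2 (le_abs_self c)
    have h2 : |c| / gumbelCenter k ≤ |c| / (sk k / 2) :=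
      div_le_div_of_nonneg_left (abs_nonneg c) (by linarith) hds2.le
    have h3 : |c| / (sk k / 2) = |c| * 2 / sk k := div_div_eq_mul_div _ _ _
    have h4 : |c| * 2 / sk k < ak k / sk k := (div_lt_div_iff_of_pos_right hsk).2 (by linarith)
    linarith
  have heq : tc c k = sk k - ak k / sk k + c / gumbelCenter k := by
    rw [tc, gumbel_eq]
  rw [heq]
  linarith

end Asymp2

section PowLemma
open Filter Topology Real


lemma squeeze_two {g : ℕ → ℝ} {B : ℝ}
    (hlow : ∀ ε > (0:ℝ), ∀ᶠ n : ℕ in atTop, B - ε < g n)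
    (hhigh : ∀ ε > (0:ℝ), ∀ᶠ n : ℕ in atTop, g n < B + ε) :
    Tendsto g atTop (𝓝 B) := by
  rw [Metric.tendsto_nhds]
  intro ε hε
  filter_upwards [hlow ε hε, hhigh ε hε] with n h1 h2
  rw [Real.dist_eq, abs_lt]
  constructor <;> linarith

lemma pow_tendsto_exp {p : ℕ → ℕ} {a : ℕ → ℝ} {c : ℝ} (hp : Tendsto p atTop atTop)
    (ha0 : ∀ᶠ n : ℕ in atTop, 0 ≤ a n)
    (hpa : Tendsto (fun n => (p n : ℝ) * a n) atTop (𝓝 c)) :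
    Tendsto (fun n => (1 - a n) ^ (p n)) atTop (𝓝 (Real.exp (-c))) := by
  have hpc : Tendsto (fun n => (p n : ℝ)) atTop atTop :=
    tendsto_natCast_atTop_atTop.comp hp
  have hp1 : ∀ᶠ n : ℕ in atTop, 1 ≤ p n := hp.eventually (eventually_ge_atTop 1)
  have ha : Tendsto a atTop (𝓝 0) := by
    have h := hpa.mul hpc.inv_tendsto_atTop
    rw [mul_zero] at h
    refine Tendsto.congr' ?_ h
    filter_upwards [hp1] with n hn
    have : (p n : ℝ) ≠ 0 := by positivity
    simp only [Pi.inv_apply]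
    field_simp
  have hsmall : ∀ᶠ n : ℕ in atTop, a n ≤ 1/2 :=
    ha.eventually (eventually_le_nhds (by norm_num : (0:ℝ) < 1/2))
  have hlog : Tendsto (fun n => (p n : ℝ) * Real.log (1 - a n)) atTop (𝓝 (-c)) := by
    have hlower : Tendsto (fun n => -((p n : ℝ) * a n) - 2 * (((p n : ℝ) * a n) * a n))
        atTop (𝓝 (-c)) := by
      have := hpa.neg.sub (((hpa.mul ha)).const_mul 2)
      simpa [mul_comm] using this
    have hupper : Tendsto (fun n => -((p n : ℝ) * a n)) atTop (𝓝 (-c)) := hpa.neg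
    apply tendsto_of_tendsto_of_tendsto_of_le_of_le' hlower hupper
    · filter_upwards [ha0, hsmall] with n h0 h12
      have h1a : (0:ℝ) < 1 - a n := by linarith
      have hexp : Real.exp (-(a n + 2 * a n ^ 2)) ≤ 1 - a n := by
        have he := Real.add_one_le_exp (a n + 2 * a n ^ 2)
        have hpos : (0:ℝ) < 1 + (a n + 2 * a n ^ 2) := by nlinarith
        rw [Real.exp_neg]
        rw [inv_le_iff_one_le_mul₀ (Real.exp_pos _)]
        nlinarith [Real.exp_pos (a n + 2 * a n ^ 2)]
      have hloglb : -(a n + 2 * a n ^ 2) ≤ Real.log (1 - a n) :=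
        (Real.le_log_iff_exp_le h1a).2 hexp
      have := mul_le_mul_of_nonneg_left hloglb (by positivity : (0:ℝ) ≤ (p n : ℝ))
      calc -((p n : ℝ) * a n) - 2 * (((p n : ℝ) * a n) * a n)
          = (p n : ℝ) * (-(a n + 2 * a n ^ 2)) := by ring
        _ ≤ (p n : ℝ) * Real.log (1 - a n) := this
    · filter_upwards [ha0, hsmall] with n h0 h12
      have h1a : (0:ℝ) < 1 - a n := by linarith
      have hub : Real.log (1 - a n) ≤ -a n := by
        have := Real.log_le_sub_one_of_pos h1a
        linarith
      have := mul_le_mul_of_nonneg_left hub (by positivity : (0:ℝ) ≤ (p n : ℝ))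
      calc (p n : ℝ) * Real.log (1 - a n) ≤ (p n : ℝ) * (-a n) := this
        _ = -((p n : ℝ) * a n) := by ring
  have h := (Real.continuous_exp.tendsto _).comp hlog
  refine Tendsto.congr' ?_ h
  filter_upwards [ha0, hsmall] with n h0 h12
  have h1a : (0:ℝ) < 1 - a n := by linarith
  simp only [Function.comp_apply]
  rw [← Real.log_pow, Real.exp_log (pow_pos h1a _)]

end PowLemma
lemma abs_ratio_bounds {P T δ : ℝ} (hT : 0 < T) (h : |P / T - 1| < δ) :
    (1 - δ) * T < P ∧ P < (1 + δ) * T := by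
  rw [abs_lt] at h
  have e : P / T * T = P := div_mul_cancel₀ _ hT.ne'
  constructor
  · have h1 : 1 - δ < P / T := by linarith [h.1]
    have := mul_lt_mul_of_pos_right h1 hT
    rwa [e] at this
  · have h2 : P / T < 1 + δ := by linarith [h.2]
    have := mul_lt_mul_of_pos_right h2 hT
    rwa [e] at this

section ProbSide
open MeasureTheory ProbabilityTheory Filter Topology Real Set

variable {Ω : Type*} [MeasureSpace Ω] [IsProbabilityMeasure (ℙ : Measure Ω)]

lemma prob_prod (T : ℕ → Ω → ℝ) (W : Ω → ℝ)
    (hTindep : iIndepFun T ℙ)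
    (hTident : ∀ i, IdentDistrib (T i) W ℙ ℙ)
    (m : ℕ) {B : Set ℝ} (hB : MeasurableSet B) :
    ℙ (⋂ i ∈ Finset.range m, (T i)⁻¹' B) = (ℙ (W ⁻¹' B)) ^ m := by
  rw [hTindep.meas_biInter (fun i _ => ⟨B, hB, rfl⟩)]
  rw [Finset.prod_congr rfl (fun i _ => (hTident i).measure_mem_eq hB)]
  rw [Finset.prod_const, Finset.card_range]

lemma main_event_measure (T : ℕ → Ω → ℝ) (W : Ω → ℝ)
    (hTindep : iIndepFun T ℙ)
    (hTident : ∀ i, IdentDistrib (T i) W ℙ ℙ)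
    (m : ℕ) (u t : ℝ) :
    (ℙ {ω | (∀ i < m, T i ω ≤ t) ∧ (∃ i < m, T i ω ≤ u)}).toReal
      = (ℙ (W ⁻¹' Set.Iic t)).toReal ^ m - (ℙ (W ⁻¹' Set.Ioc u t)).toReal ^ m := by
  have hset : {ω | (∀ i < m, T i ω ≤ t) ∧ (∃ i < m, T i ω ≤ u)}
      = (⋂ i ∈ Finset.range m, (T i)⁻¹' Set.Iic t)
        \ (⋂ i ∈ Finset.range m, (T i)⁻¹' Set.Ioc u t) := by
    ext ω
    simp only [Set.mem_setOf_eq, Set.mem_diff, Set.mem_iInter, Set.mem_preimage,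
      Set.mem_Iic, Set.mem_Ioc, Finset.mem_range]
    constructor
    · rintro ⟨h1, i, hi, h2⟩
      refine ⟨fun j hj => h1 j hj, ?_⟩
      intro hall
      exact absurd h2 (not_le.2 (hall i hi).1)
    · rintro ⟨h1, h2⟩
      refine ⟨h1, ?_⟩
      by_contra hcon
      push_neg at hcon
      exact h2 fun i hi => ⟨hcon i hi, h1 i hi⟩
  have hsub : (⋂ i ∈ Finset.range m, (T i)⁻¹' Set.Ioc u t)
      ⊆ ⋂ i ∈ Finset.range m, (T i)⁻¹' Set.Iic t :=
    Set.iInter₂_mono fun i _ => Set.preimage_mono Set.Ioc_subset_Iic_self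
  have hBnull : NullMeasurableSet (⋂ i ∈ Finset.range m, (T i)⁻¹' Set.Ioc u t) ℙ := by
    refine NullMeasurableSet.biInter (Finset.range m).countable_toSet fun i _ =>
      ((hTident i).aemeasurable_fst.nullMeasurable) measurableSet_Ioc
  rw [hset, measure_diff hsub hBnull (measure_ne_top ℙ _)]
  rw [prob_prod T W hTindep hTident m measurableSet_Iic,
    prob_prod T W hTindep hTident m measurableSet_Ioc]
  have hle : ℙ (W ⁻¹' Set.Ioc u t) ^ m ≤ ℙ (W ⁻¹' Set.Iic t) ^ m :=
    pow_le_pow_left' (measure_mono (Set.preimage_mono Set.Ioc_subset_Iic_self)) m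
  rw [ENNReal.toReal_sub_of_le hle (ENNReal.pow_ne_top (measure_ne_top ℙ _))]
  rw [ENNReal.toReal_pow, ENNReal.toReal_pow]

lemma iic_split (W : Ω → ℝ) (hW : Measurable W) {u t : ℝ} (hut : u ≤ t) :
    (ℙ (W ⁻¹' Set.Ioc u t)).toReal
      = (ℙ (W ⁻¹' Set.Iic t)).toReal - (ℙ (W ⁻¹' Set.Iic u)).toReal := by
  have hunion : W ⁻¹' Set.Iic u ∪ W ⁻¹' Set.Ioc u t = W ⁻¹' Set.Iic t := by
    rw [← Set.preimage_union, Set.Iic_union_Ioc_eq_Iic hut]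
  have hdisj : Disjoint (W ⁻¹' Set.Iic u) (W ⁻¹' Set.Ioc u t) := by
    apply Disjoint.preimage
    rw [Set.disjoint_left]
    rintro v hv ⟨hv1, _⟩
    exact absurd hv (not_le.2 hv1)
  have h2 : ℙ (W ⁻¹' Set.Iic u ∪ W ⁻¹' Set.Ioc u t)
      = ℙ (W ⁻¹' Set.Iic u) + ℙ (W ⁻¹' Set.Ioc u t) :=
    measure_union hdisj (hW measurableSet_Ioc)
  rw [hunion] at h2
  rename' h2 => this
  rw [this, ENNReal.toReal_add (by finiteness) (by finiteness)]
  ring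

end ProbSide

/-- Under the two-sided normal large deviation approximation, for
`p_n → ∞` with `p_n < exp(γ_n²/2)` and i.i.d. copies `(S_{ni})_{i<p}` of `S_n`,
`P(max_{i<p} d_p(S_{ni}/√n − d_p) ≤ x, min_{i<p} d_p(S_{ni}/√n + d_p) ≤ y)
  → Λ(x)(1 − Λ(−y))` for all `x, y ∈ ℝ`. -/
theorem stmt9 {Ω : Type*} [MeasureSpace Ω] [IsProbabilityMeasure (ℙ : Measure Ω)]
    (X : ℕ → Ω → ℝ) (hmeas : ∀ i, Measurable (X i))
    (hindep : iIndepFun X ℙ)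
    (hident : ∀ i, IdentDistrib (X i) (X 0) ℙ ℙ)
    (hint : Integrable (X 0) ℙ)
    (hmean : ∫ ω, X 0 ω ∂ℙ = 0)
    (hvar : variance (X 0) ℙ = 1)
    (γ : ℕ → ℝ) (hγ : Tendsto γ atTop atTop)
    (hLDplus : ∀ δ > (0 : ℝ), ∀ᶠ n : ℕ in atTop, ∀ x : ℝ, 0 ≤ x → x < γ n →
      |(ℙ {ω | x < partialSum X n ω / Real.sqrt n}).toReal / stdNormalTail x - 1| < δ)
    (hLDminus : ∀ δ > (0 : ℝ), ∀ᶠ n : ℕ in atTop, ∀ x : ℝ, 0 ≤ x → x < γ n →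
      |(ℙ {ω | x < -(partialSum X n ω / Real.sqrt n)}).toReal / stdNormalTail x - 1| < δ)
    (p : ℕ → ℕ) (hp : Tendsto p atTop atTop)
    (hpγ : ∀ n, (p n : ℝ) < Real.exp (γ n ^ 2 / 2))
    -- `(S n i)_{i < p n}` are i.i.d. copies of `S_n = partialSum X n`:
    (S : ℕ → ℕ → Ω → ℝ)
    (hSindep : ∀ n, iIndepFun (S n) ℙ)
    (hSident : ∀ n i, IdentDistrib (S n i) (partialSum X n) ℙ ℙ) :
    ∀ x y : ℝ,
      Tendsto (fun n : ℕ =>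
          (ℙ {ω |
              (∀ i < p n,
                gumbelCenter (p n) * (S n i ω / Real.sqrt n - gumbelCenter (p n)) ≤ x) ∧
              (∃ i < p n,
                gumbelCenter (p n) * (S n i ω / Real.sqrt n + gumbelCenter (p n)) ≤ y)}).toReal)
        atTop (𝓝 (gumbelCDF x * (1 - gumbelCDF (-y)))) := by
  
  intro x y
  have hWmeas : ∀ n, Measurable (partialSum X n) := fun n => by
    unfold partialSum
    exact Finset.measurable_sum _ fun i _ => hmeas i
  -- notation
  set t1 : ℕ → ℝ := fun n => tc x (p n) with ht1_def
  set u1 : ℕ → ℝ := fun n => -(tc (-y) (p n)) with hu1_def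
  set r : ℕ → ℝ := fun n => (ℙ ((partialSum X n) ⁻¹' Set.Iic (t1 n * Real.sqrt n))).toReal
    with hr_def
  set sB : ℕ → ℝ := fun n => (ℙ ((partialSum X n) ⁻¹' Set.Iic (u1 n * Real.sqrt n))).toReal
    with hsB_def
  -- basic facts
  have hr01 : ∀ n, 0 ≤ r n ∧ r n ≤ 1 := fun n =>
    ⟨ENNReal.toReal_nonneg, by
      have h := prob_le_one (μ := (ℙ : Measure Ω))
        (s := (partialSum X n) ⁻¹' Set.Iic (t1 n * Real.sqrt n))
      simpa using ENNReal.toReal_mono ENNReal.one_ne_top h⟩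
  have hsB01 : ∀ n, 0 ≤ sB n ∧ sB n ≤ 1 := fun n =>
    ⟨ENNReal.toReal_nonneg, by
      have h := prob_le_one (μ := (ℙ : Measure Ω))
        (s := (partialSum X n) ⁻¹' Set.Iic (u1 n * Real.sqrt n))
      simpa using ENNReal.toReal_mono ENNReal.one_ne_top h⟩
  have hn1 : ∀ᶠ n : ℕ in atTop, (0:ℝ) < Real.sqrt n := by
    filter_upwards [eventually_ge_atTop 1] with n hn
    have : (0:ℝ) < (n:ℝ) := by exact_mod_cast hn
    exact Real.sqrt_pos.2 this
  have hdpos : ∀ᶠ n : ℕ in atTop, 0 < gumbelCenter (p n) :=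
    (h_d.comp hp).eventually (eventually_gt_atTop 0)
  have htcpos : ∀ c : ℝ, ∀ᶠ n : ℕ in atTop, 0 < tc c (p n) := fun c =>
    ((h_t c).comp hp).eventually (eventually_gt_atTop 0)
  have hskγ : ∀ᶠ n : ℕ in atTop, sk (p n) ≤ γ n := by
    filter_upwards [hγ.eventually (eventually_gt_atTop (0:ℝ)),
      hp.eventually (eventually_ge_atTop 1)] with n hγn hpn
    have hpn0 : (0:ℝ) < (p n : ℝ) := by exact_mod_cast hpn
    have hlog : Real.log (p n) < γ n ^ 2 / 2 := (Real.log_lt_iff_lt_exp hpn0).2 (hpγ n)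
    have hlognn : 0 ≤ Real.log (p n) := Real.log_nonneg (by exact_mod_cast hpn)
    have h1 : 2 * Real.log (p n) < γ n ^ 2 := by linarith
    have h2 : Real.sqrt (2 * Real.log (p n)) < Real.sqrt (γ n ^ 2) :=
      Real.sqrt_lt_sqrt (by linarith) h1
    rw [Real.sqrt_sq hγn.le] at h2
    rw [sk, Lk]
    exact h2.le
  have hγbound : ∀ c : ℝ, ∀ᶠ n : ℕ in atTop, tc c (p n) < γ n := fun c => by
    filter_upwards [hp.eventually (lemC c), hskγ] with n h1 h2
    linarith
  -- `1 - r n` as an upper-tail probability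
  have h1r : ∀ᶠ n : ℕ in atTop,
      (ℙ {ω | t1 n < partialSum X n ω / Real.sqrt n}).toReal = 1 - r n := by
    filter_upwards [hn1] with n hsq
    have hset : {ω | t1 n < partialSum X n ω / Real.sqrt n}
        = ((partialSum X n) ⁻¹' Set.Iic (t1 n * Real.sqrt n))ᶜ := by
      ext ω
      simp only [Set.mem_setOf_eq, Set.mem_compl_iff, Set.mem_preimage, Set.mem_Iic, not_le]
      rw [lt_div_iff₀ hsq]
    rw [hset, prob_compl_eq_one_sub ((hWmeas n) measurableSet_Iic),
      ENNReal.toReal_sub_of_le prob_le_one ENNReal.one_ne_top, ENNReal.toReal_one, hr_def]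
  -- bounds on `1 - r n` from the LD hypothesis
  have hprob_plus : ∀ δ > (0:ℝ), ∀ᶠ n : ℕ in atTop,
      (1 - δ) * stdNormalTail (t1 n) < 1 - r n ∧
      1 - r n < (1 + δ) * stdNormalTail (t1 n) := by
    intro δ hδ
    filter_upwards [hLDplus δ hδ, htcpos x, hγbound x, h1r] with n hLD hpos hγn h1rn
    have hT : 0 < stdNormalTail (t1 n) := stdNormalTail_pos hpos
    have habs := hLD (t1 n) hpos.le hγn
    rw [h1rn] at habs
    exact abs_ratio_bounds hT habs
  -- bounds on the lower tail from the LD hypothesis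
  have hprob_minus : ∀ c' : ℝ, ∀ δ > (0:ℝ), ∀ᶠ n : ℕ in atTop,
      (1 - δ) * stdNormalTail (tc (-(y + c')) (p n)) <
        (ℙ ((partialSum X n) ⁻¹' Set.Iio (-(tc (-(y + c')) (p n)) * Real.sqrt n))).toReal ∧
      (ℙ ((partialSum X n) ⁻¹' Set.Iio (-(tc (-(y + c')) (p n)) * Real.sqrt n))).toReal <
        (1 + δ) * stdNormalTail (tc (-(y + c')) (p n)) := by
    intro c' δ hδ
    filter_upwards [hLDminus δ hδ, htcpos (-(y + c')), hγbound (-(y + c')), hn1]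
      with n hLD hpos hγn hsq
    have hT : 0 < stdNormalTail (tc (-(y + c')) (p n)) := stdNormalTail_pos hpos
    have hset : {ω | tc (-(y + c')) (p n) < -(partialSum X n ω / Real.sqrt n)}
        = (partialSum X n) ⁻¹' Set.Iio (-(tc (-(y + c')) (p n)) * Real.sqrt n) := by
      ext ω
      simp only [Set.mem_setOf_eq, Set.mem_preimage, Set.mem_Iio]
      rw [lt_neg, div_lt_iff₀ hsq]
    have habs := hLD (tc (-(y + c')) (p n)) hpos.le hγn
    rw [hset] at habs
    exact abs_ratio_bounds hT habs
    -- Step B : p_n (1 - r_n) → exp (-x)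
  have hT1tend : Tendsto (fun n => (p n : ℝ) * stdNormalTail (t1 n)) atTop
      (𝓝 (Real.exp (-x))) := (lemB x).comp hp
  have hrtend : Tendsto (fun n => (p n : ℝ) * (1 - r n)) atTop (𝓝 (Real.exp (-x))) := by
    have hB : (0:ℝ) < Real.exp (-x) := Real.exp_pos _
    apply squeeze_two
    · intro ε hε
      set δ : ℝ := ε / (2 * (Real.exp (-x) + 1)) with hδdef
      have hδ : 0 < δ := by positivity
      have hδB : δ * Real.exp (-x) < ε / 2 := by
        rw [hδdef, div_mul_eq_mul_div, div_lt_div_iff₀ (by positivity) two_pos]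
        nlinarith
      have hkey : Real.exp (-x) - ε < (1 - δ) * Real.exp (-x) := by nlinarith
      have hev := (hT1tend.const_mul (1 - δ)).eventually (eventually_gt_nhds hkey)
      filter_upwards [hev, hprob_plus δ hδ] with n h1 h2
      have hp0 : (0:ℝ) ≤ (p n : ℝ) := Nat.cast_nonneg _
      have h3 := mul_le_mul_of_nonneg_left h2.1.le hp0
      calc Real.exp (-x) - ε < (1 - δ) * ((p n : ℝ) * stdNormalTail (t1 n)) := h1
        _ = (p n : ℝ) * ((1 - δ) * stdNormalTail (t1 n)) := by ring
        _ ≤ (p n : ℝ) * (1 - r n) := h3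
    · intro ε hε
      set δ : ℝ := ε / (2 * (Real.exp (-x) + 1)) with hδdef
      have hδ : 0 < δ := by positivity
      have hδB : δ * Real.exp (-x) < ε / 2 := by
        rw [hδdef, div_mul_eq_mul_div, div_lt_div_iff₀ (by positivity) two_pos]
        nlinarith
      have hkey : (1 + δ) * Real.exp (-x) < Real.exp (-x) + ε := by nlinarith
      have hev := (hT1tend.const_mul (1 + δ)).eventually (eventually_lt_nhds hkey)
      filter_upwards [hev, hprob_plus δ hδ] with n h1 h2
      have hp0 : (0:ℝ) ≤ (p n : ℝ) := Nat.cast_nonneg _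
      have h3 := mul_le_mul_of_nonneg_left h2.2.le hp0
      calc (p n : ℝ) * (1 - r n) ≤ (p n : ℝ) * ((1 + δ) * stdNormalTail (t1 n)) := h3
        _ = (1 + δ) * ((p n : ℝ) * stdNormalTail (t1 n)) := by ring
        _ < Real.exp (-x) + ε := h1
  -- Step C : p_n sB_n → exp y
  have hT2tend : Tendsto (fun n => (p n : ℝ) * stdNormalTail (tc (-y) (p n))) atTop
      (𝓝 (Real.exp y)) := by
    have h := (lemB (-y)).comp hp
    simpa [Function.comp_def] using h
  have hsBtend : Tendsto (fun n => (p n : ℝ) * sB n) atTop (𝓝 (Real.exp y)) := by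
    have hB : (0:ℝ) < Real.exp y := Real.exp_pos _
    apply squeeze_two
    · intro ε hε
      set δ : ℝ := ε / (2 * (Real.exp y + 1)) with hδdef
      have hδ : 0 < δ := by positivity
      have hδB : δ * Real.exp y < ε / 2 := by
        rw [hδdef, div_mul_eq_mul_div, div_lt_div_iff₀ (by positivity) two_pos]
        nlinarith
      have hkey : Real.exp y - ε < (1 - δ) * Real.exp y := by nlinarith
      have hev := (hT2tend.const_mul (1 - δ)).eventually (eventually_gt_nhds hkey)
      have hpm := hprob_minus 0 δ hδ
      simp only [add_zero] at hpm
      filter_upwards [hev, hpm] with n h1 h2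
      have hp0 : (0:ℝ) ≤ (p n : ℝ) := Nat.cast_nonneg _
      have hu1eq : -(tc (-y) (p n)) = u1 n := rfl
      rw [hu1eq] at h2
      have hIsub : (ℙ ((partialSum X n) ⁻¹' Set.Iio (u1 n * Real.sqrt n))).toReal ≤ sB n :=
        ENNReal.toReal_mono (measure_ne_top _ _)
          (measure_mono (Set.preimage_mono Set.Iio_subset_Iic_self))
      have h3 : (1 - δ) * stdNormalTail (tc (-y) (p n)) ≤ sB n := le_trans h2.1.le hIsub
      have h4 := mul_le_mul_of_nonneg_left h3 hp0
      calc Real.exp y - ε < (1 - δ) * ((p n : ℝ) * stdNormalTail (tc (-y) (p n))) := h1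
        _ = (p n : ℝ) * ((1 - δ) * stdNormalTail (tc (-y) (p n))) := by ring
        _ ≤ (p n : ℝ) * sB n := h4
    · intro ε hε
      -- choose c' > 0 with exp (y + c') < exp y + ε/2
      have hcont : Tendsto (fun c' : ℝ => Real.exp (y + c')) (𝓝[>] (0:ℝ))
          (𝓝 (Real.exp y)) := by
        apply tendsto_nhdsWithin_of_tendsto_nhds
        have hc : Continuous fun c' : ℝ => Real.exp (y + c') := by continuity
        simpa using hc.tendsto 0
      have hlt : Real.exp y < Real.exp y + ε / 2 := by linarith
      obtain ⟨c', hc'small, hc'pos⟩ :=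
        ((hcont.eventually (eventually_lt_nhds hlt)).and self_mem_nhdsWithin).exists
      have hE' : (0:ℝ) < Real.exp (y + c') := Real.exp_pos _
      have hgap : (0:ℝ) < Real.exp y + ε - Real.exp (y + c') := by linarith
      set δ : ℝ := (Real.exp y + ε - Real.exp (y + c')) / (2 * (Real.exp (y + c') + 1))
        with hδdef
      have hδ : 0 < δ := by positivity
      have hkey : (1 + δ) * Real.exp (y + c') < Real.exp y + ε := by
        have hδE : δ * Real.exp (y + c') < Real.exp y + ε - Real.exp (y + c') := by
          rw [hδdef, div_mul_eq_mul_div, div_lt_iff₀ (by positivity)]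
          nlinarith
        nlinarith
      have hT2c : Tendsto (fun n => (p n : ℝ) * stdNormalTail (tc (-(y + c')) (p n))) atTop
          (𝓝 (Real.exp (y + c'))) := by
        have h := (lemB (-(y + c'))).comp hp
        simpa [Function.comp_def] using h
      have hev := (hT2c.const_mul (1 + δ)).eventually (eventually_lt_nhds hkey)
      filter_upwards [hev, hprob_minus c' δ hδ, hn1, hdpos] with n h1 h2 hsq hd
      have hp0 : (0:ℝ) ≤ (p n : ℝ) := Nat.cast_nonneg _
      have htclt : tc (-(y + c')) (p n) < tc (-y) (p n) := by
        rw [tc, tc]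
        have := (div_lt_div_iff_of_pos_right hd).2 (show -(y + c') < -y by linarith)
        linarith
      have hlt2 : u1 n * Real.sqrt n < -(tc (-(y + c')) (p n)) * Real.sqrt n := by
        apply mul_lt_mul_of_pos_right _ hsq
        rw [hu1_def]
        simp only [neg_lt_neg_iff]
        exact htclt
      have hsub : Set.Iic (u1 n * Real.sqrt n)
          ⊆ Set.Iio (-(tc (-(y + c')) (p n)) * Real.sqrt n) := fun v hv =>
        lt_of_le_of_lt hv hlt2
      have hle : sB n ≤
          (ℙ ((partialSum X n) ⁻¹' Set.Iio (-(tc (-(y + c')) (p n)) * Real.sqrt n))).toReal :=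
        ENNReal.toReal_mono (measure_ne_top _ _) (measure_mono (Set.preimage_mono hsub))
      have h3 : sB n ≤ (1 + δ) * stdNormalTail (tc (-(y + c')) (p n)) :=
        le_trans hle h2.2.le
      have h4 := mul_le_mul_of_nonneg_left h3 hp0
      calc (p n : ℝ) * sB n ≤ (p n : ℝ) * ((1 + δ) * stdNormalTail (tc (-(y + c')) (p n))) := h4
        _ = (1 + δ) * ((p n : ℝ) * stdNormalTail (tc (-(y + c')) (p n))) := by ring
        _ < Real.exp y + ε := h1
  -- Step A : identification of the probability
  have hevent : ∀ᶠ n : ℕ in atTop,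
      (ℙ {ω | (∀ i < p n,
            gumbelCenter (p n) * (S n i ω / Real.sqrt n - gumbelCenter (p n)) ≤ x) ∧
          (∃ i < p n,
            gumbelCenter (p n) * (S n i ω / Real.sqrt n + gumbelCenter (p n)) ≤ y)}).toReal
        = r n ^ p n - (r n - sB n) ^ p n := by
    filter_upwards [hn1, hdpos, htcpos x, htcpos (-y)] with n hsq hd htx hty
    have ht1n : t1 n = gumbelCenter (p n) + x / gumbelCenter (p n) := rfl
    have hu1n : u1 n = y / gumbelCenter (p n) - gumbelCenter (p n) := by
      show -(gumbelCenter (p n) + (-y) / gumbelCenter (p n)) = _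
      ring
    have hut : u1 n * Real.sqrt n ≤ t1 n * Real.sqrt n := by
      have h5 : u1 n ≤ t1 n := by
        have h6 : u1 n = -(tc (-y) (p n)) := rfl
        rw [h6]
        have := htx
        show -(tc (-y) (p n)) ≤ tc x (p n)
        linarith
      exact mul_le_mul_of_nonneg_right h5 hsq.le
    have hiff1 : ∀ v : ℝ,
        gumbelCenter (p n) * (v / Real.sqrt n - gumbelCenter (p n)) ≤ x
          ↔ v ≤ t1 n * Real.sqrt n := by
      intro v
      rw [mul_comm, ← le_div_iff₀ hd, sub_le_iff_le_add, div_le_iff₀ hsq, ht1n,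
        add_comm (x / gumbelCenter (p n))]
    have hiff2 : ∀ v : ℝ,
        gumbelCenter (p n) * (v / Real.sqrt n + gumbelCenter (p n)) ≤ y
          ↔ v ≤ u1 n * Real.sqrt n := by
      intro v
      rw [mul_comm, ← le_div_iff₀ hd, ← le_sub_iff_add_le, div_le_iff₀ hsq, hu1n]
    have hseteq : {ω | (∀ i < p n,
            gumbelCenter (p n) * (S n i ω / Real.sqrt n - gumbelCenter (p n)) ≤ x) ∧
          (∃ i < p n,
            gumbelCenter (p n) * (S n i ω / Real.sqrt n + gumbelCenter (p n)) ≤ y)}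
        = {ω | (∀ i < p n, S n i ω ≤ t1 n * Real.sqrt n)
            ∧ (∃ i < p n, S n i ω ≤ u1 n * Real.sqrt n)} := by
      ext ω
      simp only [Set.mem_setOf_eq]
      constructor
      · rintro ⟨h1, i, hi, h2⟩
        exact ⟨fun j hj => (hiff1 _).1 (h1 j hj), i, hi, (hiff2 _).1 h2⟩
      · rintro ⟨h1, i, hi, h2⟩
        exact ⟨fun j hj => (hiff1 _).2 (h1 j hj), i, hi, (hiff2 _).2 h2⟩
    rw [hseteq,
      main_event_measure (S n) (partialSum X n) (hSindep n) (hSident n) (p n)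
        (u1 n * Real.sqrt n) (t1 n * Real.sqrt n),
      iic_split (partialSum X n) (hWmeas n) hut]
  -- Step D/E : conclusion
  have hqtend : Tendsto (fun n => (p n : ℝ) * (1 - (r n - sB n))) atTop
      (𝓝 (Real.exp (-x) + Real.exp y)) :=
    (hrtend.add hsBtend).congr fun n => by ring
  have hpow1 : Tendsto (fun n => r n ^ p n) atTop (𝓝 (Real.exp (-Real.exp (-x)))) := by
    have h := pow_tendsto_exp hp
      (Filter.Eventually.of_forall fun n => by linarith [(hr01 n).2]) hrtend
    exact h.congr fun n => by rw [sub_sub_cancel]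
  have hpow2 : Tendsto (fun n => (r n - sB n) ^ p n) atTop
      (𝓝 (Real.exp (-(Real.exp (-x) + Real.exp y)))) := by
    have h := pow_tendsto_exp hp
      (Filter.Eventually.of_forall fun n => by linarith [(hr01 n).2, (hsB01 n).1]) hqtend
    exact h.congr fun n => by rw [sub_sub_cancel]
  have hlimeq : gumbelCDF x * (1 - gumbelCDF (-y))
      = Real.exp (-Real.exp (-x)) - Real.exp (-(Real.exp (-x) + Real.exp y)) := by
    rw [gumbelCDF, gumbelCDF, neg_neg, mul_sub, mul_one, ← Real.exp_add]
    ring_nf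
  rw [hlimeq]
  exact Tendsto.congr' (hevent.mono fun n h => h.symm) (hpow1.sub hpow2)
end

section
/- Let (P_n) be a sequence of positive integer-valued random variables and (p_n) a sequence of positive reals with p_n → ∞ such that P_n/p_n → 1 in probability. Let (q_n) be real numbers with q_n ∈ [0,1] for all n and q_n^{p_n} → L as n → ∞ for some L ∈ (0,1]. Then E[ q_n^{P_n} ] → L as n → ∞. -/
open MeasureTheory ProbabilityTheory Filter Topology Real

/-- Let `(P_n)` be positive integer-valued random variables and
`(p_n)` positive reals with `p_n → ∞` and `P_n/p_n → 1` in probability. If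
`q_n ∈ [0,1]` and `q_n^{p_n} → L ∈ (0,1]`, then `E[q_n^{P_n}] → L`. -/
theorem stmt19 {Ω : Type*} [MeasureSpace Ω] [IsProbabilityMeasure (ℙ : Measure Ω)]
    (P : ℕ → Ω → ℕ) (hPmeas : ∀ n, Measurable (P n)) (hPpos : ∀ n ω, 0 < P n ω)
    (p : ℕ → ℝ) (hppos : ∀ n, 0 < p n) (hp : Tendsto p atTop atTop)
    (hPp : TendstoInMeasure ℙ (fun n ω => (P n ω : ℝ) / p n) atTop (fun _ => 1))
    (q : ℕ → ℝ) (hq : ∀ n, q n ∈ Set.Icc (0 : ℝ) 1)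
    (l : ℝ) (hl : l ∈ Set.Ioc (0 : ℝ) 1)
    (hql : Tendsto (fun n => q n ^ p n) atTop (𝓝 l)) :
    Tendsto (fun n => ∫ ω, q n ^ P n ω ∂ℙ) atTop (𝓝 l) := by
  have hl0 : (0:ℝ) < l := hl.1
  have hqpos : ∀ᶠ n in atTop, 0 < q n := by
    filter_upwards [hql.eventually (eventually_gt_nhds hl0)] with n hn
    by_contra h
    have hq0 : q n = 0 := le_antisymm (not_lt.1 h) (hq n).1
    rw [hq0, Real.zero_rpow (hppos n).ne'] at hn
    exact lt_irrefl 0 hn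
  refine tendsto_of_subseq_tendsto fun ns hns => ?_
  have hX : TendstoInMeasure ℙ (fun i ω => (P (ns i) ω : ℝ) / p (ns i)) atTop (fun _ => 1) :=
    fun ε hε => (hPp ε hε).comp hns
  obtain ⟨ms, hms, hae⟩ := hX.exists_seq_tendsto_ae
  refine ⟨ms, ?_⟩
  set k : ℕ → ℕ := fun i => ns (ms i) with hk_def
  have hk : Tendsto k atTop atTop := hns.comp hms.tendsto_atTop
  have hkq : ∀ᶠ i in atTop, 0 < q (k i) := hk.eventually hqpos
  have hlogc : Tendsto (fun i => Real.log (q (k i) ^ p (k i))) atTop (𝓝 (Real.log l)) :=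
    (hql.log hl0.ne').comp hk
  have hptwise : ∀ᵐ ω ∂(ℙ : Measure Ω),
      Tendsto (fun i => q (k i) ^ P (k i) ω) atTop (𝓝 l) := by
    filter_upwards [hae] with ω hω
    have h1 : Tendsto (fun i => ((P (k i) ω : ℝ) / p (k i)) * Real.log (q (k i) ^ p (k i)))
        atTop (𝓝 (1 * Real.log l)) := hω.mul hlogc
    rw [one_mul] at h1
    have h2 : Tendsto (fun i => Real.exp (((P (k i) ω : ℝ) / p (k i)) *
        Real.log (q (k i) ^ p (k i)))) atTop (𝓝 (Real.exp (Real.log l))) :=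
      (Real.continuous_exp.tendsto _).comp h1
    rw [Real.exp_log hl0] at h2
    refine h2.congr' ?_
    filter_upwards [hkq] with i hi
    rw [Real.log_rpow hi]
    have hp0 : p (k i) ≠ 0 := (hppos (k i)).ne'
    have : ((P (k i) ω : ℝ) / p (k i)) * (p (k i) * Real.log (q (k i)))
        = (P (k i) ω : ℝ) * Real.log (q (k i)) := by
      field_simp
    rw [this, Real.exp_nat_mul, Real.exp_log hi]
  have hint : Tendsto (fun i => ∫ ω, q (k i) ^ P (k i) ω ∂ℙ) atTop
      (𝓝 (∫ _ω : Ω, l ∂ℙ)) := by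
    refine tendsto_integral_of_dominated_convergence (fun _ => (1:ℝ)) ?_ ?_ ?_ hptwise
    · intro i
      exact (measurable_from_top.comp (hPmeas (k i)) :
        Measurable fun ω => q (k i) ^ P (k i) ω).aestronglyMeasurable
    · exact integrable_const 1
    · intro i
      filter_upwards with ω
      rw [Real.norm_eq_abs, abs_of_nonneg (pow_nonneg (hq _).1 _)]
      exact pow_le_one₀ (hq _).1 (hq _).2
  rwa [integral_const, probReal_univ, one_smul] at hint
end
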